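/- arXiv:1410.2388 — 3 statements merged into one kernel-verified Lean document; each statement's English description precedes it below -/
import Mathlib

section
/- For integers m, n ≥ 2, the maximum length (number of vertices) of a cycle in the rectangular grid graph R(m,n) is m·n when m·n is even, and m·n − 1 when m·n is odd. -/
/-- Adjacency in the infinite 2D integer grid graph `G∞`:
two lattice points are adjacent iff they are at (Euclidean) distance 1. -/
def GridAdj (u v : ℤ × ℤ) : Prop :=
  (u.1 - v.1).natAbs + (u.2 - v.2).natAbs = 1

/-- The infinite grid graph `G∞` as a simple graph on `ℤ × ℤ`. -/
def GridGraph : SimpleGraph (ℤ × ℤ) where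
  Adj u v := GridAdj u v
  symm := ⟨by intro u v h; simp only [GridAdj] at *; omega⟩
  loopless := ⟨by intro u h; simp only [GridAdj] at h; omega⟩

/-- A grid graph with vertex set `V` is solid if the subgraph of `G∞`
induced by the complement of `V` is connected. -/
def Solid (V : Set (ℤ × ℤ)) : Prop :=
  (GridGraph.induce Vᶜ).Connected

/-- Vertex set of the rectangular grid graph `R(m,n)`. -/
def RectV (m n : ℤ) : Set (ℤ × ℤ) :=
  {v | 1 ≤ v.1 ∧ v.1 ≤ m ∧ 1 ≤ v.2 ∧ v.2 ≤ n}

/-- `l` is a path from `s` to `t` in the grid graph induced by the vertex set `V`,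
recorded as the list of its vertices. -/
def IsGridPath (V : Set (ℤ × ℤ)) (l : List (ℤ × ℤ)) (s t : ℤ × ℤ) : Prop :=
  l ≠ [] ∧ (∀ v ∈ l, v ∈ V) ∧ l.Nodup ∧ l.Chain' GridAdj ∧
    l.head? = some s ∧ l.getLast? = some t

/-- `l` is a cycle in the grid graph induced by the vertex set `V`, recorded as the
list of its (distinct) vertices; consecutive vertices, and the last and first
vertices, are adjacent.  Its length (number of vertices) is `l.length`. -/
def IsGridCycle (V : Set (ℤ × ℤ)) (l : List (ℤ × ℤ)) : Prop :=
  3 ≤ l.length ∧ (∀ v ∈ l, v ∈ V) ∧ l.Nodup ∧ (l ++ l.take 1).Chain' GridAdj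

/-- The sequence of unit steps of a path (as a list of vertices). -/
def pathSteps (l : List (ℤ × ℤ)) : List (ℤ × ℤ) :=
  (l.zip l.tail).map fun p => p.2 - p.1

/-- A path is monotone if it contains no two steps in opposite directions. -/
def MonotonePath (l : List (ℤ × ℤ)) : Prop :=
  ∀ d₁ ∈ pathSteps l, ∀ d₂ ∈ pathSteps l, d₁ ≠ -d₂

/-- The first and the last step of the (sub)path `c` point in opposite directions. -/
def OppEnds (c : List (ℤ × ℤ)) : Prop :=
  3 ≤ c.length ∧
    c.getD 1 (0, 0) - c.getD 0 (0, 0) =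
      c.getD (c.length - 2) (0, 0) - c.getD (c.length - 1) (0, 0)

/-- A cave: a (contiguous) subpath whose first and last steps point in opposite
directions, which is minimal with this property. -/
def IsCave (c : List (ℤ × ℤ)) : Prop :=
  OppEnds c ∧ ∀ c', c' <:+: c → c'.length < c.length → ¬ OppEnds c'

/-- The first endpoint `p` of a cave. -/
def caveStart (c : List (ℤ × ℤ)) : ℤ × ℤ := c.getD 0 (0, 0)

/-- The second endpoint `q` of a cave. -/
def caveEnd (c : List (ℤ × ℤ)) : ℤ × ℤ := c.getD (c.length - 1) (0, 0)

/-- `v` is a lattice point strictly between `p` and `q` on the straight axis-parallel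
segment from `p` to `q` (the "vertices inside" a cave with endpoints `p`, `q`). -/
def Between (p q v : ℤ × ℤ) : Prop :=
  (p.1 = q.1 ∧ v.1 = p.1 ∧ min p.2 q.2 < v.2 ∧ v.2 < max p.2 q.2) ∨
  (p.2 = q.2 ∧ v.2 = p.2 ∧ min p.1 q.1 < v.1 ∧ v.1 < max p.1 q.1)

/-- `v` is a lattice point on the closed straight segment from `p` to `q`. -/
def OnSeg (p q v : ℤ × ℤ) : Prop := v = p ∨ v = q ∨ Between p q v

/-- The (directed) edges of a cycle given by its vertex list `l`,
including the closing edge from the last vertex back to the first. -/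
def cycEdges (l : List (ℤ × ℤ)) : List ((ℤ × ℤ) × (ℤ × ℤ)) :=
  (l ++ l.take 1).zip (l ++ l.take 1).tail

/-- The (undirected) edge `{a, b}` occurs on the cycle `l`. -/
def CycEdgeMem (l : List (ℤ × ℤ)) (a b : ℤ × ℤ) : Prop :=
  (a, b) ∈ cycEdges l ∨ (b, a) ∈ cycEdges l

/-- The (directed) edges of a path given by its vertex list `l`. -/
def pathEdges (l : List (ℤ × ℤ)) : List ((ℤ × ℤ) × (ℤ × ℤ)) := l.zip l.tail

/-- The (undirected) edge `{a, b}` occurs on the path `l`. -/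
def PathEdgeMem (l : List (ℤ × ℤ)) (a b : ℤ × ℤ) : Prop :=
  (a, b) ∈ pathEdges l ∨ (b, a) ∈ pathEdges l

/-- Number of vertical edges of the cycle `l` crossed by the rightward horizontal ray
starting at the point `(a, b + 1/2)`: vertical edges joining `(x,b)` and `(x,b+1)`
with `x > a`.  Used for the even–odd ("inside") test. -/
def vertCross (l : List (ℤ × ℤ)) (a b : ℤ) : ℕ :=
  (cycEdges l).countP fun e =>
    decide (e.1.1 = e.2.1 ∧ a < e.1.1 ∧
      ((e.1.2 = b ∧ e.2.2 = b + 1) ∨ (e.1.2 = b + 1 ∧ e.2.2 = b)))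

/-- Number of horizontal edges of the cycle `l` crossed by the upward vertical ray
starting at the point `(a + 1/2, b)`: horizontal edges joining `(a,y)` and `(a+1,y)`
with `y > b`. -/
def horizCross (l : List (ℤ × ℤ)) (a b : ℤ) : ℕ :=
  (cycEdges l).countP fun e =>
    decide (e.1.2 = e.2.2 ∧ b < e.1.2 ∧
      ((e.1.1 = a ∧ e.2.1 = a + 1) ∨ (e.1.1 = a + 1 ∧ e.2.1 = a)))

/-- The lattice point `v` lies in the closed bounded region determined by the cycle `l`
(regarded as a simple closed curve): either on the curve, or inside it by the
even–odd rule. -/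
def InClosedRegion (l : List (ℤ × ℤ)) (v : ℤ × ℤ) : Prop :=
  v ∈ l ∨ Odd (vertCross l v.1 v.2)

/-- The unit grid edge `{u, v}` lies in the closed bounded region determined by the
cycle `l`: either it is an edge of the cycle, or its midpoint is inside the cycle by
the even–odd rule. -/
def EdgeInClosedRegion (l : List (ℤ × ℤ)) (u v : ℤ × ℤ) : Prop :=
  CycEdgeMem l u v ∨
    (u.1 = v.1 ∧ Odd (vertCross l u.1 (min u.2 v.2))) ∨
    (u.2 = v.2 ∧ Odd (horizCross l (min u.1 v.1) u.2))

/-- The cave `c` of the cycle `l` is convex: the vertices and edges inside it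
(i.e. on the straight segment between its endpoints) lie in the closed bounded
region determined by `l`. -/
def ConvexCave (l c : List (ℤ × ℤ)) : Prop :=
  (∀ v, Between (caveStart c) (caveEnd c) v → InClosedRegion l v) ∧
  (∀ u v, OnSeg (caveStart c) (caveEnd c) u → OnSeg (caveStart c) (caveEnd c) v →
    GridAdj u v → EdgeInClosedRegion l u v)

/-- `c` is a cave of the cycle `l`: a cave that occurs as a contiguous subpath of the
cyclic vertex sequence of `l` (i.e. as a prefix of some rotation of `l`). -/
def CaveOfCycle (l c : List (ℤ × ℤ)) : Prop :=
  IsCave c ∧ ∃ i, c <+: l.rotate i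

/-- The cave `c` is contractible with respect to the path/cycle `l`:
no vertex inside the cave belongs to `l`. -/
def ContractibleCaveOf (l c : List (ℤ × ℤ)) : Prop :=
  ∀ v, Between (caveStart c) (caveEnd c) v → v ∉ l

/-- The straight axis-parallel segment from `p` to `q`, as the list of its lattice
points from `p` to `q` (the shortest path between `p` and `q` on their common line). -/
def segList (p q : ℤ × ℤ) : List (ℤ × ℤ) :=
  if p.1 = q.1 then
    (List.range ((q.2 - p.2).natAbs + 1)).map fun i =>
      (p.1, p.2 + (if p.2 ≤ q.2 then (i : ℤ) else -(i : ℤ)))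
  else
    (List.range ((q.1 - p.1).natAbs + 1)).map fun i =>
      (p.1 + (if p.1 ≤ q.1 then (i : ℤ) else -(i : ℤ)), p.2)

/-- Adjacency in the infinite 3D integer grid: distance 1. -/
def Grid3Adj (u v : ℤ × ℤ × ℤ) : Prop :=
  (u.1 - v.1).natAbs + (u.2.1 - v.2.1).natAbs + (u.2.2 - v.2.2).natAbs = 1

/-- Vertex set of the 3D grid graph `R(m,n,o)`. -/
def Rect3V (m n o : ℤ) : Set (ℤ × ℤ × ℤ) :=
  {v | 1 ≤ v.1 ∧ v.1 ≤ m ∧ 1 ≤ v.2.1 ∧ v.2.1 ≤ n ∧ 1 ≤ v.2.2 ∧ v.2.2 ≤ o}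

/-- `l` is a path from `s` to `t` in the 3D grid graph induced by `V`. -/
def IsGrid3Path (V : Set (ℤ × ℤ × ℤ)) (l : List (ℤ × ℤ × ℤ)) (s t : ℤ × ℤ × ℤ) : Prop :=
  l ≠ [] ∧ (∀ v ∈ l, v ∈ V) ∧ l.Nodup ∧ l.Chain' Grid3Adj ∧
    l.head? = some s ∧ l.getLast? = some t

/-- `l` is a cycle in the 3D grid graph induced by `V`. -/
def IsGrid3Cycle (V : Set (ℤ × ℤ × ℤ)) (l : List (ℤ × ℤ × ℤ)) : Prop :=
  3 ≤ l.length ∧ (∀ v ∈ l, v ∈ V) ∧ l.Nodup ∧ (l ++ l.take 1).Chain' Grid3Adj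

/-- The folding map `F` from the 3D grid `R(m,n,o)` to the rectangular grid `R(m,no)`:
`F(v) = (x(v), n(z(v)-1) + y(v))` if `z(v)` is odd, and
`F(v) = (x(v), n·z(v) - y(v) + 1)` if `z(v)` is even. -/
def foldMap (n : ℤ) (v : ℤ × ℤ × ℤ) : ℤ × ℤ :=
  if Odd v.2.2 then (v.1, n * (v.2.2 - 1) + v.2.1) else (v.1, n * v.2.2 - v.2.1 + 1)
lemma chain'_range_map {α : Type*} (R : α → α → Prop) (f : ℕ → α) (N : ℕ)
    (h : ∀ i, i + 1 < N → R (f i) (f (i+1))) :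
    ((List.range N).map f).Chain' R := by
  unfold List.Chain'
  rw [List.isChain_iff_getElem]
  intro i hi
  simp only [List.length_map, List.length_range] at hi
  simpa using h i (by omega)

lemma isGridCycle_of_fn (V : Set (ℤ × ℤ)) (f : ℕ → ℤ × ℤ) (N : ℕ) (h3 : 3 ≤ N)
    (hmem : ∀ i < N, f i ∈ V)
    (hinj : ∀ i < N, ∀ j < N, f i = f j → i = j)
    (hadj : ∀ i, i + 1 < N → GridAdj (f i) (f (i+1)))
    (hclose : GridAdj (f (N-1)) (f 0)) :
    IsGridCycle V ((List.range N).map f) ∧ ((List.range N).map f).length = N := by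
  have hlen : ((List.range N).map f).length = N := by simp
  have hne : (List.range N).map f ≠ [] := by
    intro h; rw [← List.length_eq_zero_iff] at h; omega
  refine ⟨⟨by omega, ?_, ?_, ?_⟩, hlen⟩
  · intro v hv
    simp only [List.mem_map, List.mem_range] at hv
    obtain ⟨i, hi, rfl⟩ := hv
    exact hmem i hi
  · refine List.Nodup.map_on ?_ (List.nodup_range (n := N))
    intro i hi j hj hij
    exact hinj i (List.mem_range.mp hi) j (List.mem_range.mp hj) hij
  · have htake : ((List.range N).map f).take 1 = [f 0] := by
      obtain ⟨N', rfl⟩ : ∃ N', N = N' + 1 := ⟨N - 1, by omega⟩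
      rw [List.range_succ_eq_map]
      simp
    unfold List.Chain'
    rw [htake, List.isChain_append]
    refine ⟨chain'_range_map _ _ _ hadj, List.isChain_singleton _, ?_⟩
    intro x hx y hy
    simp only [List.head?_cons, Option.mem_def, Option.some.injEq] at hy
    subst hy
    have hgl : ((List.range N).map f).getLast? = some (f (N-1)) := by
      rw [List.getLast?_eq_getElem?]
      simp [hlen, List.getElem?_map, List.getElem?_range (show N - 1 < N by omega)]
    rw [hgl] at hx
    simp only [Option.mem_def, Option.some.injEq] at hx
    subst hx
    exact hclose

/-- Boustrophedon Hamiltonian cycle in the `M × N` grid, `N` even: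
spine up column `x = 1`, then snake down through columns `2..M`. -/
def snakeF (M N : ℕ) (i : ℕ) : ℤ × ℤ :=
  if i < N then (1, 1 + i)
  else
    let j := i - N
    let r := j / (M - 1)
    let c := j % (M - 1)
    (if r % 2 = 0 then (2 + c : ℤ) else (M : ℤ) - c, (N : ℤ) - r)

lemma snakeF_lt (M N i : ℕ) (h : i < N) : snakeF M N i = (1, 1 + (i : ℤ)) := by
  simp [snakeF, h]

lemma snakeF_eval (M N r c : ℕ) (hM : 2 ≤ M) (hc : c < M - 1) :
    snakeF M N (N + ((M-1) * r + c)) =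
      (if r % 2 = 0 then (2 + c : ℤ) else (M : ℤ) - c, (N : ℤ) - r) := by
  have h1 : ¬ (N + ((M-1) * r + c) < N) := by omega
  have hb : 0 < M - 1 := by omega
  simp only [snakeF, h1, if_false]
  have hj : N + ((M-1) * r + c) - N = (M-1) * r + c := by omega
  rw [hj, Nat.mul_add_div hb, Nat.mul_add_mod, Nat.div_eq_of_lt hc,
    Nat.mod_eq_of_lt hc]
  simp

lemma snake_decomp (M N i : ℕ) (hM : 2 ≤ M) (hNi : N ≤ i) (hi : i < M * N) :
    ∃ r c, i = N + ((M-1) * r + c) ∧ c < M - 1 ∧ r < N := by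
  have hb : 0 < M - 1 := by omega
  refine ⟨(i - N) / (M-1), (i - N) % (M-1), ?_, Nat.mod_lt _ hb, ?_⟩
  · have := Nat.div_add_mod (i - N) (M-1)
    omega
  · rw [Nat.div_lt_iff_lt_mul hb]
    have : N * (M - 1) + N = M * N := by
      have h1 : M - 1 + 1 = M := by omega
      calc N * (M-1) + N = N * ((M-1)+1) := by ring
        _ = M * N := by rw [h1]; ring
    omega

lemma snakeF_mem (M N : ℕ) (hM : 2 ≤ M) (hN : 2 ≤ N) :
    ∀ i < M * N, snakeF M N i ∈ RectV M N := by
  intro i hi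
  by_cases h : i < N
  · rw [snakeF_lt M N i h]
    refine ⟨by norm_num, by exact_mod_cast by omega, by norm_num, ?_⟩
    simp only
    omega
  · obtain ⟨r, c, rfl, hc, hr⟩ := snake_decomp M N i hM (by omega) hi
    rw [snakeF_eval M N r c hM hc]
    constructor
    · simp only; split_ifs <;> omega
    constructor
    · simp only; split_ifs <;> omega
    · constructor <;> simp only <;> omega

lemma snakeF_inj (M N : ℕ) (hM : 2 ≤ M) (hN : 2 ≤ N) :
    ∀ i < M * N, ∀ j < M * N, snakeF M N i = snakeF M N j → i = j := by
  intro i hi j hj hij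
  by_cases h1 : i < N <;> by_cases h2 : j < N
  · rw [snakeF_lt M N i h1, snakeF_lt M N j h2, Prod.mk.injEq] at hij
    omega
  · obtain ⟨r, c, rfl, hc, hr⟩ := snake_decomp M N j hM (by omega) hj
    rw [snakeF_lt M N i h1, snakeF_eval M N r c hM hc, Prod.mk.injEq] at hij
    obtain ⟨hx, -⟩ := hij
    split_ifs at hx <;> omega
  · obtain ⟨r, c, rfl, hc, hr⟩ := snake_decomp M N i hM (by omega) hi
    rw [snakeF_lt M N j h2, snakeF_eval M N r c hM hc, Prod.mk.injEq] at hij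
    obtain ⟨hx, -⟩ := hij
    split_ifs at hx <;> omega
  · obtain ⟨r, c, rfl, hc, hr⟩ := snake_decomp M N i hM (by omega) hi
    obtain ⟨r', c', rfl, hc', hr'⟩ := snake_decomp M N j hM (by omega) hj
    rw [snakeF_eval M N r c hM hc, snakeF_eval M N r' c' hM hc',
      Prod.mk.injEq] at hij
    obtain ⟨hx, hy⟩ := hij
    have hrr : r = r' := by omega
    subst hrr
    have hcc : c = c' := by split_ifs at hx <;> omega
    omega

lemma snakeF_adj (M N : ℕ) (hM : 2 ≤ M) (hN : 2 ≤ N) :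
    ∀ i, i + 1 < M * N → GridAdj (snakeF M N i) (snakeF M N (i+1)) := by
  intro i hi
  by_cases h1 : i + 1 < N
  · rw [snakeF_lt M N i (by omega), snakeF_lt M N (i+1) h1]
    simp only [GridAdj]
    omega
  by_cases h2 : i < N
  · -- i + 1 = N
    have hiN : i + 1 = N := by omega
    have h0 : (N : ℕ) + ((M-1) * 0 + 0) = i + 1 := by omega
    rw [snakeF_lt M N i h2, ← h0, snakeF_eval M N 0 0 hM (by omega)]
    simp only [GridAdj]
    split_ifs <;> push_cast <;> omega
  · obtain ⟨r, c, hdec, hc, hr⟩ := snake_decomp M N i hM (by omega) (by omega)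
    by_cases h3 : c + 1 < M - 1
    · rw [hdec, show N + ((M-1) * r + c) + 1 = N + ((M-1) * r + (c+1)) from by omega,
        snakeF_eval M N r c hM hc, snakeF_eval M N r (c+1) hM h3]
      simp only [GridAdj]
      split_ifs <;> push_cast <;> omega
    · have h4 : N + ((M-1) * r + c) + 1 = N + ((M-1) * (r+1) + 0) := by
        have : (M-1) * (r+1) = (M-1) * r + (M-1) := by ring
        omega
      rw [hdec, h4, snakeF_eval M N r c hM hc, snakeF_eval M N (r+1) 0 hM (by omega)]
      simp only [GridAdj]
      split_ifs <;> push_cast <;> omega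

lemma snakeF_close (M N : ℕ) (hM : 2 ≤ M) (hN : 2 ≤ N) (hNe : N % 2 = 0) :
    GridAdj (snakeF M N (M * N - 1)) (snakeF M N 0) := by
  have h0 : M * N - 1 = N + ((M-1) * (N-1) + (M-2)) := by
    obtain ⟨k, rfl⟩ := Nat.exists_eq_add_of_le hM
    obtain ⟨k', rfl⟩ := Nat.exists_eq_add_of_le hN
    have e1 : (2+k) * (2+k') = k*k' + 2*k + 2*k' + 4 := by ring
    have e2 : (2+k-1) * (2+k'-1) = (k+1) * (k'+1) := by congr 1 <;> omega
    have e3 : (k+1) * (k'+1) = k*k' + k + k' + 1 := by ring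
    omega
  rw [h0, snakeF_eval M N (N-1) (M-2) hM (by omega), snakeF_lt M N 0 (by omega),
    if_neg (show ¬ (N-1) % 2 = 0 from by omega)]
  simp only [GridAdj]
  omega

/-- Near-Hamiltonian cycle (all but `(1,N)`) in the `M × N` grid, `M`, `N` odd:
spine up column `x = 1` to `(1,N-1)`, zigzag along the top two rows to `(M,N-1)`,
then snake down through columns `2..M`. -/
def oddF (M N : ℕ) (i : ℕ) : ℤ × ℤ :=
  if i < N - 1 then (1, 1 + (i : ℤ))
  else if i < N - 1 + 2 * (M - 1) then
    let j := i - (N - 1)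
    (((2 + j / 2 : ℕ) : ℤ), if (j + 1) % 4 < 2 then (N : ℤ) - 1 else (N : ℤ))
  else
    let j := i - (N - 1) - 2 * (M - 1)
    let r := j / (M - 1)
    let c := j % (M - 1)
    (if r % 2 = 0 then (M : ℤ) - c else (2 + c : ℤ), (N : ℤ) - 2 - r)

lemma oddF_lt (M N i : ℕ) (h : i < N - 1) : oddF M N i = (1, 1 + (i : ℤ)) := by
  simp [oddF, h]

lemma oddF_mid (M N j : ℕ) (hj : j < 2 * (M - 1)) :
    oddF M N (N - 1 + j) =
      (((2 + j / 2 : ℕ) : ℤ), if (j + 1) % 4 < 2 then (N : ℤ) - 1 else (N : ℤ)) := by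
  have h1 : ¬ (N - 1 + j < N - 1) := by omega
  have h2 : N - 1 + j < N - 1 + 2 * (M - 1) := by omega
  simp only [oddF, h1, if_false, h2, if_true]
  have : N - 1 + j - (N - 1) = j := by omega
  rw [this]

lemma oddF_eval (M N r c : ℕ) (hM : 2 ≤ M) (hc : c < M - 1) :
    oddF M N (N - 1 + 2 * (M - 1) + ((M - 1) * r + c)) =
      (if r % 2 = 0 then (M : ℤ) - c else (2 + c : ℤ), (N : ℤ) - 2 - r) := by
  have h1 : ¬ (N - 1 + 2 * (M - 1) + ((M - 1) * r + c) < N - 1) := by omega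
  have h2 : ¬ (N - 1 + 2 * (M - 1) + ((M - 1) * r + c) < N - 1 + 2 * (M - 1)) := by omega
  have hb : 0 < M - 1 := by omega
  simp only [oddF, h1, if_false, h2]
  have hj : N - 1 + 2 * (M - 1) + ((M - 1) * r + c) - (N - 1) - 2 * (M - 1)
      = (M - 1) * r + c := by omega
  rw [hj, Nat.mul_add_div hb, Nat.mul_add_mod, Nat.div_eq_of_lt hc, Nat.mod_eq_of_lt hc]
  simp

lemma odd_total (M N : ℕ) (hM : 3 ≤ M) (hN : 3 ≤ N) :
    N - 1 + 2 * (M - 1) + (N - 2) * (M - 1) = M * N - 1 := by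
  obtain ⟨k, rfl⟩ := Nat.exists_eq_add_of_le hM
  obtain ⟨k', rfl⟩ := Nat.exists_eq_add_of_le hN
  have e1 : (3+k) * (3+k') = k*k' + 3*k + 3*k' + 9 := by ring
  have e2 : (3+k'-2) * (3+k-1) = (k'+1) * (k+2) := by congr 1 <;> omega
  have e3 : (k'+1) * (k+2) = k*k' + 2*k' + k + 2 := by ring
  omega

lemma odd_decomp (M N i : ℕ) (hM : 3 ≤ M) (hN : 3 ≤ N)
    (hNi : N - 1 + 2 * (M - 1) ≤ i) (hi : i < M * N - 1) :
    ∃ r c, i = N - 1 + 2 * (M - 1) + ((M - 1) * r + c) ∧ c < M - 1 ∧ r < N - 2 := by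
  have hb : 0 < M - 1 := by omega
  set j := i - (N - 1) - 2 * (M - 1) with hjdef
  refine ⟨j / (M-1), j % (M-1), ?_, Nat.mod_lt _ hb, ?_⟩
  · have := Nat.div_add_mod j (M-1)
    omega
  · rw [Nat.div_lt_iff_lt_mul hb]
    have ht := odd_total M N hM hN
    have : (N-2) * (M-1) ≤ (N - 2) * (M-1) := le_refl _
    omega

lemma oddF_mem (M N : ℕ) (hM : 3 ≤ M) (hN : 3 ≤ N) :
    ∀ i < M * N - 1, oddF M N i ∈ RectV M N := by
  intro i hi
  by_cases h1 : i < N - 1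
  · rw [oddF_lt M N i h1]
    exact ⟨by norm_num, by simp only; omega, by norm_num, by simp only; omega⟩
  by_cases h2 : i < N - 1 + 2 * (M - 1)
  · obtain ⟨j, rfl⟩ := Nat.exists_eq_add_of_le (show N - 1 ≤ i from by omega)
    have hj : j < 2 * (M - 1) := by omega
    rw [oddF_mid M N j hj]
    refine ⟨by simp only; omega, by simp only; omega, ?_, ?_⟩ <;>
      simp only <;> split_ifs <;> omega
  · obtain ⟨r, c, rfl, hc, hr⟩ := odd_decomp M N i hM hN (by omega) hi
    rw [oddF_eval M N r c (by omega) hc]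
    refine ⟨?_, ?_, by simp only; omega, by simp only; omega⟩ <;>
      simp only <;> split_ifs <;> omega

lemma oddF_inj (M N : ℕ) (hM : 3 ≤ M) (hN : 3 ≤ N) :
    ∀ i < M * N - 1, ∀ j < M * N - 1, oddF M N i = oddF M N j → i = j := by
  have key : ∀ i < M * N - 1, ∀ j < M * N - 1, i ≤ j → oddF M N i = oddF M N j → i = j := by
    intro i hi j hj hij heq
    by_cases h1 : i < N - 1 <;> by_cases h2 : j < N - 1
    · rw [oddF_lt M N i h1, oddF_lt M N j h2, Prod.mk.injEq] at heq
      omega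
    · by_cases h3 : j < N - 1 + 2 * (M - 1)
      · obtain ⟨j', rfl⟩ := Nat.exists_eq_add_of_le (show N - 1 ≤ j from by omega)
        rw [oddF_lt M N i h1, oddF_mid M N j' (by omega), Prod.mk.injEq] at heq
        obtain ⟨hx, -⟩ := heq
        omega
      · obtain ⟨r, c, rfl, hc, hr⟩ := odd_decomp M N j hM hN (by omega) hj
        rw [oddF_lt M N i h1, oddF_eval M N r c (by omega) hc, Prod.mk.injEq] at heq
        obtain ⟨hx, -⟩ := heq
        split_ifs at hx <;> omega
    · omega
    · by_cases h3 : i < N - 1 + 2 * (M - 1) <;> by_cases h4 : j < N - 1 + 2 * (M - 1)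
      · obtain ⟨i', rfl⟩ := Nat.exists_eq_add_of_le (show N - 1 ≤ i from by omega)
        obtain ⟨j', rfl⟩ := Nat.exists_eq_add_of_le (show N - 1 ≤ j from by omega)
        rw [oddF_mid M N i' (by omega), oddF_mid M N j' (by omega), Prod.mk.injEq] at heq
        obtain ⟨hx, hy⟩ := heq
        split_ifs at hy <;> omega
      · obtain ⟨i', rfl⟩ := Nat.exists_eq_add_of_le (show N - 1 ≤ i from by omega)
        obtain ⟨r, c, rfl, hc, hr⟩ := odd_decomp M N j hM hN (by omega) hj
        rw [oddF_mid M N i' (by omega), oddF_eval M N r c (by omega) hc, Prod.mk.injEq] at heq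
        obtain ⟨-, hy⟩ := heq
        split_ifs at hy <;> omega
      · omega
      · obtain ⟨r, c, rfl, hc, hr⟩ := odd_decomp M N i hM hN (by omega) hi
        obtain ⟨r', c', hj', hc', hr'⟩ := odd_decomp M N j hM hN (by omega) hj
        rw [hj'] at heq ⊢
        rw [oddF_eval M N r c (by omega) hc, oddF_eval M N r' c' (by omega) hc',
          Prod.mk.injEq] at heq
        obtain ⟨hx, hy⟩ := heq
        have hrr : r = r' := by omega
        subst hrr
        have hcc : c = c' := by split_ifs at hx <;> omega
        omega
  intro i hi j hj heq
  rcases le_total i j with h | h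
  · exact key i hi j hj h heq
  · exact (key j hj i hi h heq.symm).symm

lemma oddF_adj (M N : ℕ) (hM : 3 ≤ M) (hN : 3 ≤ N) (hMo : M % 2 = 1) :
    ∀ i, i + 1 < M * N - 1 → GridAdj (oddF M N i) (oddF M N (i+1)) := by
  intro i hi
  by_cases h1 : i + 1 < N - 1
  · rw [oddF_lt M N i (by omega), oddF_lt M N (i+1) h1]
    simp only [GridAdj]
    omega
  by_cases h2 : i < N - 1
  · -- i + 1 = N - 1, junction part1 → part2
    rw [oddF_lt M N i h2, show i + 1 = N - 1 + 0 from by omega,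
      oddF_mid M N 0 (by omega)]
    simp only [GridAdj]
    split_ifs <;> omega
  by_cases h3 : i + 1 < N - 1 + 2 * (M - 1)
  · -- part2 → part2
    obtain ⟨j, rfl⟩ := Nat.exists_eq_add_of_le (show N - 1 ≤ i from by omega)
    rw [show N - 1 + j + 1 = N - 1 + (j + 1) from by omega,
      oddF_mid M N j (by omega), oddF_mid M N (j+1) (by omega)]
    simp only [GridAdj]
    split_ifs <;> omega
  by_cases h4 : i < N - 1 + 2 * (M - 1)
  · -- part2 → part3 junction
    have hieq : i = N - 1 + (2 * (M - 1) - 1) := by omega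
    rw [hieq, oddF_mid M N (2 * (M - 1) - 1) (by omega),
      show N - 1 + (2 * (M - 1) - 1) + 1 = N - 1 + 2 * (M - 1) + ((M-1) * 0 + 0) from by omega,
      oddF_eval M N 0 0 (by omega) (by omega)]
    simp only [GridAdj]
    split_ifs <;> omega
  · obtain ⟨r, c, hdec, hc, hr⟩ := odd_decomp M N i hM hN (by omega) (by omega)
    by_cases h5 : c + 1 < M - 1
    · rw [hdec, show N - 1 + 2*(M-1) + ((M-1) * r + c) + 1
          = N - 1 + 2*(M-1) + ((M-1) * r + (c+1)) from by omega,
        oddF_eval M N r c (by omega) hc, oddF_eval M N r (c+1) (by omega) h5]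
      simp only [GridAdj]
      split_ifs <;> omega
    · have h6 : N - 1 + 2*(M-1) + ((M-1) * r + c) + 1
          = N - 1 + 2*(M-1) + ((M-1) * (r+1) + 0) := by
        have : (M-1) * (r+1) = (M-1) * r + (M-1) := by ring
        omega
      rw [hdec, h6, oddF_eval M N r c (by omega) hc,
        oddF_eval M N (r+1) 0 (by omega) (by omega)]
      simp only [GridAdj]
      split_ifs <;> omega

lemma oddF_close (M N : ℕ) (hM : 3 ≤ M) (hN : 3 ≤ N) (hNo : N % 2 = 1) :
    GridAdj (oddF M N (M * N - 1 - 1)) (oddF M N 0) := by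
  have ht := odd_total M N hM hN
  have h0 : M * N - 1 - 1 = N - 1 + 2 * (M - 1) + ((M-1) * (N-3) + (M-2)) := by
    have : (M-1) * (N-3) + (M-1) = (M-1) * (N-2) := by
      rw [show N - 2 = (N-3) + 1 from by omega, Nat.mul_add, Nat.mul_one]
    have h7 : (N-2) * (M-1) = (M-1) * (N-2) := Nat.mul_comm _ _
    omega
  rw [h0, oddF_eval M N (N-3) (M-2) (by omega) (by omega), oddF_lt M N 0 (by omega),
    if_pos (show (N-3) % 2 = 0 from by omega)]
  simp only [GridAdj]
  omega

lemma cycle_length_le (m n : ℤ) (hm : 0 ≤ m) (hn : 0 ≤ n) (l : List (ℤ × ℤ))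
    (h : IsGridCycle (RectV m n) l) : (l.length : ℤ) ≤ m * n := by
  obtain ⟨-, hmem, hnd, -⟩ := h
  have hsub : l.toFinset ⊆ Finset.Icc (1:ℤ) m ×ˢ Finset.Icc (1:ℤ) n := by
    intro v hv
    rw [List.mem_toFinset] at hv
    obtain ⟨h1, h2, h3, h4⟩ := hmem v hv
    simp only [Finset.mem_product, Finset.mem_Icc]
    exact ⟨⟨h1, h2⟩, h3, h4⟩
  have hcard := Finset.card_le_card hsub
  rw [List.toFinset_card_of_nodup hnd, Finset.card_product, Int.card_Icc,
    Int.card_Icc] at hcard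
  have h1 : (1:ℤ) ≤ m + 1 - 1 + 1 := by omega
  calc (l.length : ℤ) ≤ ((m + 1 - 1).toNat * (n + 1 - 1).toNat : ℕ) := by
        exact_mod_cast hcard
    _ = m * n := by
        push_cast
        rw [Int.toNat_of_nonneg (by omega), Int.toNat_of_nonneg (by omega)]
        congr 1 <;> omega

lemma chain_parity : ∀ (l : List (ℤ × ℤ)), l.Chain' GridAdj →
    ∀ a ∈ l.head?, ∀ b ∈ l.getLast?, ((a.1 + a.2) + l.length) % 2 = ((b.1 + b.2) + 1) % 2
  | [] => by intro _ a ha; simp at ha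
  | [x] => by
      intro _ a ha b hb
      simp only [List.head?_cons, Option.mem_def, Option.some.injEq] at ha
      simp only [List.getLast?_singleton, Option.mem_def, Option.some.injEq] at hb
      subst ha; subst hb; rfl
  | x :: y :: t => by
      intro hch a ha b hb
      unfold List.Chain' at hch
      rw [List.isChain_cons_cons] at hch
      obtain ⟨hadj, hch'⟩ := hch
      simp only [List.head?_cons, Option.mem_def, Option.some.injEq] at ha
      subst ha
      have hb' : b ∈ (y :: t).getLast? := by
        rwa [List.getLast?_cons_cons] at hb
      have := chain_parity (y :: t) hch' y (by simp) b hb'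
      simp only [GridAdj] at hadj
      simp only [List.length_cons] at this ⊢
      omega

lemma cycle_length_even (V : Set (ℤ × ℤ)) (l : List (ℤ × ℤ))
    (h : IsGridCycle V l) : l.length % 2 = 0 := by
  obtain ⟨h3, -, -, hch⟩ := h
  obtain ⟨x, t, rfl⟩ : ∃ x t, l = x :: t := by
    cases l with
    | nil => simp at h3
    | cons x t => exact ⟨x, t, rfl⟩
  have htake : (x :: t).take 1 = [x] := by simp
  rw [htake] at hch
  have hhead : ((x :: t) ++ [x]).head? = some x := by simp
  have hlast : ((x :: t) ++ [x]).getLast? = some x := by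
    rw [List.getLast?_append]
    simp
  have := chain_parity _ hch x hhead x hlast
  simp only [List.length_append, List.length_cons, List.length_singleton,
    List.length_nil] at this ⊢
  omega

lemma gridAdj_swap {u v : ℤ × ℤ} (h : GridAdj u v) : GridAdj u.swap v.swap := by
  simp only [GridAdj, Prod.swap] at *
  omega

lemma mem_rectV_swap {a b : ℤ} {v : ℤ × ℤ} (h : v ∈ RectV a b) : v.swap ∈ RectV b a := by
  obtain ⟨h1, h2, h3, h4⟩ := h
  exact ⟨h3, h4, h1, h2⟩

/-- For integers `m, n ≥ 2`, the maximum number of vertices of a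
cycle in the rectangular grid graph `R(m,n)` is `m·n` if `m·n` is even,
and `m·n - 1` if `m·n` is odd. -/
theorem longest_cycle_in_rect (m n : ℤ) (hm : 2 ≤ m) (hn : 2 ≤ n) :
    IsGreatest {k : ℤ | ∃ l : List (ℤ × ℤ), IsGridCycle (RectV m n) l ∧ (l.length : ℤ) = k}
      (if Even (m * n) then m * n else m * n - 1) := by
  lift m to ℕ using (by omega) with M
  lift n to ℕ using (by omega) with N
  have hM : 2 ≤ M := by exact_mod_cast hm
  have hN : 2 ≤ N := by exact_mod_cast hn
  have h4 : 4 ≤ M * N := le_trans (by norm_num) (Nat.mul_le_mul hM hN)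
  have hcast : ((M * N : ℕ) : ℤ) = (M : ℤ) * N := by push_cast; ring
  constructor
  · -- membership: construct the cycle
    by_cases hE : Even ((M : ℤ) * N)
    · rw [if_pos hE]
      have hEnat : Even (M * N) := by
        rw [← hcast] at hE; exact_mod_cast hE
      rcases Nat.even_mul.mp hEnat with hEm | hEn
      · -- M even: transpose of snake in N × M grid
        have hMe : M % 2 = 0 := Nat.even_iff.mp hEm
        obtain ⟨hcyc, hlen⟩ := isGridCycle_of_fn (RectV M N)
          (fun i => (snakeF N M i).swap) (N * M)
          (by rw [Nat.mul_comm]; omega)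
          (fun i hi => mem_rectV_swap (snakeF_mem N M hN hM i hi))
          (fun i hi j hj hij => snakeF_inj N M hN hM i hi j hj
            (Prod.swap_injective hij))
          (fun i hi => gridAdj_swap (snakeF_adj N M hN hM i hi))
          (gridAdj_swap (snakeF_close N M hN hM hMe))
        exact ⟨_, hcyc, by rw [hlen]; push_cast; ring⟩
      · have hNe : N % 2 = 0 := Nat.even_iff.mp hEn
        obtain ⟨hcyc, hlen⟩ := isGridCycle_of_fn (RectV M N)
          (snakeF M N) (M * N)
          (by omega)
          (snakeF_mem M N hM hN)
          (snakeF_inj M N hM hN)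
          (snakeF_adj M N hM hN)
          (snakeF_close M N hM hN hNe)
        exact ⟨_, hcyc, by rw [hlen]; exact hcast⟩
    · rw [if_neg hE]
      have hOnat : ¬ Even (M * N) := by
        rw [← hcast] at hE
        intro h; exact hE (by exact_mod_cast h)
      rw [Nat.even_mul, not_or] at hOnat
      have hMo : M % 2 = 1 := Nat.odd_iff.mp (Nat.not_even_iff_odd.mp hOnat.1)
      have hNo : N % 2 = 1 := Nat.odd_iff.mp (Nat.not_even_iff_odd.mp hOnat.2)
      have hM3 : 3 ≤ M := by omega
      have hN3 : 3 ≤ N := by omega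
      have h9 : 9 ≤ M * N := le_trans (by norm_num) (Nat.mul_le_mul hM3 hN3)
      obtain ⟨hcyc, hlen⟩ := isGridCycle_of_fn (RectV M N)
        (oddF M N) (M * N - 1)
        (by omega)
        (oddF_mem M N hM3 hN3)
        (oddF_inj M N hM3 hN3)
        (oddF_adj M N hM3 hN3 hMo)
        (oddF_close M N hM3 hN3 hNo)
      refine ⟨_, hcyc, ?_⟩
      rw [hlen]
      omega
  · -- upper bound
    rintro k ⟨l, hc, rfl⟩
    have hle := cycle_length_le M N (by positivity) (by positivity) l hc
    split_ifs with hE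
    · exact hle
    · have heven := cycle_length_even _ _ hc
      have h1 : ((M : ℤ) * N) % 2 = 1 := Int.not_even_iff.mp hE
      have h2 : (l.length : ℤ) % 2 = 0 := by omega
      omega
end

section
/- Define F : ℤ³ → ℤ² by F(v) = (x(v), n·(z(v)−1) + y(v)) if z(v) is odd, and F(v) = (x(v), n·z(v) − y(v) + 1) if z(v) is even. Then F restricts to a bijection from the vertex set of the 3D grid graph R(m,n,o) onto the vertex set of the rectangular grid graph R(m, n·o), and whenever F(u) and F(v) are adjacent in R(m, n·o), the vertices u and v are adjacent in R(m,n,o). In particular, R(m,n,o) contains a spanning subgraph isomorphic to R(m, n·o). -/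
def gfold (n z y : ℤ) : ℤ := if Odd z then n * (z - 1) + y else n * z - y + 1

lemma foldMap_eq (n : ℤ) (v : ℤ × ℤ × ℤ) : foldMap n v = (v.1, gfold n v.2.2 v.2.1) := by
  unfold foldMap gfold; split_ifs <;> rfl

lemma gfold_bounds (n z y : ℤ) (hn : 1 ≤ n) (h1 : 1 ≤ y) (h2 : y ≤ n) :
    n * (z - 1) < gfold n z y ∧ gfold n z y ≤ n * z := by
  have h : n * (z - 1) = n * z - n := by ring
  unfold gfold; split <;> constructor <;> linarith

lemma z_unique (n z1 z2 w : ℤ) (hn : 1 ≤ n)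
    (h1 : n * (z1 - 1) < w) (h2 : w ≤ n * z1)
    (h3 : n * (z2 - 1) < w) (h4 : w ≤ n * z2) : z1 = z2 := by
  by_contra h
  rcases lt_or_gt_of_ne h with hlt | hlt
  · have : z1 ≤ z2 - 1 := by omega
    have := mul_le_mul_of_nonneg_left this (by linarith : (0:ℤ) ≤ n)
    linarith
  · have : z2 ≤ z1 - 1 := by omega
    have := mul_le_mul_of_nonneg_left this (by linarith : (0:ℤ) ≤ n)
    linarith

lemma gfold_eq (n z1 y1 z2 y2 : ℤ) (hn : 1 ≤ n)
    (hy1 : 1 ≤ y1) (hy1' : y1 ≤ n) (hy2 : 1 ≤ y2) (hy2' : y2 ≤ n)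
    (h : gfold n z1 y1 = gfold n z2 y2) : z1 = z2 ∧ y1 = y2 := by
  obtain ⟨b1, b2⟩ := gfold_bounds n z1 y1 hn hy1 hy1'
  obtain ⟨b3, b4⟩ := gfold_bounds n z2 y2 hn hy2 hy2'
  have hz : z1 = z2 := z_unique n z1 z2 (gfold n z1 y1) hn b1 b2 (h ▸ b3) (h ▸ b4)
  subst hz
  refine ⟨rfl, ?_⟩
  unfold gfold at h; split at h <;> linarith

lemma gfold_succ (n z1 y1 z2 y2 : ℤ) (hn : 1 ≤ n)
    (hy1 : 1 ≤ y1) (hy1' : y1 ≤ n) (hy2 : 1 ≤ y2) (hy2' : y2 ≤ n)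
    (h : gfold n z1 y1 + 1 = gfold n z2 y2) :
    (z2 = z1 ∧ (y2 - y1).natAbs = 1) ∨ (z2 = z1 + 1 ∧ y1 = y2) := by
  obtain ⟨b1, b2⟩ := gfold_bounds n z1 y1 hn hy1 hy1'
  obtain ⟨b3, b4⟩ := gfold_bounds n z2 y2 hn hy2 hy2'
  rcases lt_or_eq_of_le b2 with hlt | heq
  · left
    have hz : z2 = z1 := z_unique n z2 z1 (gfold n z2 y2) hn b3 b4 (by omega) (by omega)
    subst hz
    refine ⟨rfl, ?_⟩
    unfold gfold at h; split at h <;> omega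
  · right
    have hb : n * (z1 + 1 - 1) < gfold n z2 y2 := by
      rw [← h, heq]; ring_nf; omega
    have hb2 : gfold n z2 y2 ≤ n * (z1 + 1) := by
      have : n * (z1 + 1) = n * z1 + n := by ring
      omega
    have hz : z2 = z1 + 1 := z_unique n z2 (z1 + 1) (gfold n z2 y2) hn b3 b4 hb hb2
    subst hz
    refine ⟨rfl, ?_⟩
    have hpar : Odd (z1 + 1) ↔ ¬ Odd z1 := by
      rw [Int.odd_iff, Int.odd_iff]; constructor <;> intro hh <;> omega
    unfold gfold at h heq
    by_cases hodd : Odd z1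
    · rw [if_pos hodd] at heq
      have hne : ¬ Odd (z1 + 1) := fun hc => (hpar.mp hc) hodd
      rw [if_neg hne] at h
      have : n * (z1 + 1) = n * z1 + n := by ring
      have : n * (z1 - 1) = n * z1 - n := by ring
      omega
    · rw [if_neg hodd] at heq
      rw [if_pos (hpar.mpr hodd)] at h
      have : n * (z1 + 1 - 1) = n * z1 := by ring
      omega

/-- The map `F` (here `foldMap n`) restricts to a bijection from the
vertex set of the 3D grid graph `R(m,n,o)` onto the vertex set of the rectangular
grid graph `R(m, n·o)`, and whenever `F(u)` and `F(v)` are adjacent in `R(m,n·o)`,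
the vertices `u` and `v` are adjacent in `R(m,n,o)`; hence `R(m,n,o)` contains a
spanning subgraph isomorphic to `R(m, n·o)`. -/
theorem foldMap_spanning_subgraph (m n o : ℤ) (hm : 1 ≤ m) (hn : 1 ≤ n) (ho : 1 ≤ o) :
    Set.BijOn (foldMap n) (Rect3V m n o) (RectV m (n * o)) ∧
    (∀ u ∈ Rect3V m n o, ∀ v ∈ Rect3V m n o,
      GridAdj (foldMap n u) (foldMap n v) → Grid3Adj u v) := by
  constructor
  · refine ⟨?_, ?_, ?_⟩
    · -- MapsTo
      rintro ⟨x, y, z⟩ ⟨h1, h2, h3, h4, h5, h6⟩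
      rw [foldMap_eq]
      obtain ⟨b1, b2⟩ := gfold_bounds n z y hn h3 h4
      refine ⟨h1, h2, ?_, ?_⟩
      · have : 0 ≤ n * (z - 1) := mul_nonneg (by linarith) (by linarith)
        simp only at b1 ⊢; linarith
      · have : n * z ≤ n * o := mul_le_mul_of_nonneg_left h6 (by linarith)
        simp only at b2 ⊢; linarith
    · -- InjOn
      rintro ⟨ux, uy, uz⟩ ⟨_, _, h3, h4, h5, h6⟩ ⟨vx, vy, vz⟩ ⟨_, _, g3, g4, g5, g6⟩ h
      rw [foldMap_eq, foldMap_eq] at h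
      simp only [Prod.mk.injEq] at h ⊢
      obtain ⟨hx, hg⟩ := h
      obtain ⟨hz, hy⟩ := gfold_eq n uz uy vz vy hn h3 h4 g3 g4 hg
      exact ⟨hx, hy, hz⟩
    · -- SurjOn
      rintro ⟨a, b⟩ ⟨h1, h2, h3, h4⟩
      simp only at h1 h2 h3 h4
      set q := (b - 1) / n with hq
      have hdm : n * q + (b - 1) % n = b - 1 := Int.mul_ediv_add_emod (b - 1) n
      have hr0 : 0 ≤ (b - 1) % n := Int.emod_nonneg _ (by omega)
      have hrn : (b - 1) % n < n := Int.emod_lt_of_pos _ (by omega)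
      have hq0 : 0 ≤ q := Int.ediv_nonneg (by omega) (by omega)
      have hqo : q < o := by
        have hno : n * q < n * o := by omega
        exact lt_of_mul_lt_mul_left hno (by linarith)
      set r := (b - 1) % n with hrr
      by_cases hodd : Odd (q + 1)
      · refine ⟨(a, r + 1, q + 1), ?_, ?_⟩
        · simp only [Rect3V, Set.mem_setOf_eq]
          omega
        rw [foldMap_eq]
        simp only [Prod.mk.injEq]
        refine ⟨trivial, ?_⟩
        unfold gfold
        rw [if_pos hodd]
        have : n * (q + 1 - 1) = n * q := by ring
        omega
      · refine ⟨(a, n - r, q + 1), ?_, ?_⟩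
        · simp only [Rect3V, Set.mem_setOf_eq]
          omega
        rw [foldMap_eq]
        simp only [Prod.mk.injEq]
        refine ⟨trivial, ?_⟩
        unfold gfold
        rw [if_neg hodd]
        have : n * (q + 1) = n * q + n := by ring
        omega
  · -- adjacency reflection
    rintro ⟨ux, uy, uz⟩ ⟨_, _, h3, h4, _, _⟩ ⟨vx, vy, vz⟩ ⟨_, _, g3, g4, _, _⟩ h
    rw [foldMap_eq, foldMap_eq] at h
    unfold GridAdj at h
    simp only at h
    unfold Grid3Adj
    simp only
    set w1 := gfold n uz uy with hw1
    set w2 := gfold n vz vy with hw2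
    rcases Nat.eq_zero_or_pos (w1 - w2).natAbs with h0 | hp
    · have : w1 = w2 := by omega
      obtain ⟨hz, hy⟩ := gfold_eq n uz uy vz vy hn h3 h4 g3 g4 this
      subst hz; subst hy; omega
    · have hx : ux = vx := by omega
      have h1 : (w1 - w2).natAbs = 1 := by omega
      rcases (by omega : w1 + 1 = w2 ∨ w2 + 1 = w1) with hc | hc
      · rcases gfold_succ n uz uy vz vy hn h3 h4 g3 g4 hc with ⟨hz, hy⟩ | ⟨hz, hy⟩ <;> omega
      · rcases gfold_succ n vz vy uz uy hn g3 g4 h3 h4 hc with ⟨hz, hy⟩ | ⟨hz, hy⟩ <;> omega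
end

section
/- In a 3D grid graph R(m,n,o), there is a cycle of length k (i.e., with exactly k vertices) if and only if at least two of m, n, o are greater than 1, k is even, and 4 ≤ k ≤ m·n·o. -/
namespace CK3

/-- Walk predicate: `l` is a walk starting after `a`, ending at `b`. -/
def W (a : ℤ × ℤ) (l : List (ℤ × ℤ)) (b : ℤ × ℤ) : Prop :=
  List.Chain GridAdj a l ∧ (a :: l).getLast (List.cons_ne_nil _ _) = b

lemma W.nil (a : ℤ × ℤ) : W a [] a := by
  constructor
  · exact List.Chain.nil
  · rfl

lemma W.trans {a b c : ℤ × ℤ} {l₁ l₂ : List (ℤ × ℤ)} (h₁ : W a l₁ b) (h₂ : W b l₂ c) :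
    W a (l₁ ++ l₂) c := by
  induction l₁ generalizing a with
  | nil =>
    obtain ⟨-, h⟩ := h₁
    simp only [List.getLast_singleton] at h
    subst h
    simpa using h₂
  | cons x t ih =>
    obtain ⟨hc, hl⟩ := h₁
    replace hc := List.chain_cons.mp hc
    have : W x (t ++ l₂) c := ih ⟨hc.2, by simpa [List.getLast_cons] using hl⟩
    exact ⟨List.chain_cons.mpr ⟨hc.1, this.1⟩, by simpa [List.getLast_cons] using this.2⟩

lemma W.single {a b : ℤ × ℤ} (h : GridAdj a b) : W a [b] b := by
  exact ⟨List.chain_cons.mpr ⟨h, List.Chain.nil⟩, rfl⟩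

/-- vertical segment going up, excluding start `p`. -/
def upL (p : ℤ × ℤ) (t : ℕ) : List (ℤ × ℤ) :=
  (List.range t).map fun (i : ℕ) => (p.1, p.2 + (i:ℤ) + 1)

/-- vertical segment going down, excluding start `p`. -/
def downL (p : ℤ × ℤ) (t : ℕ) : List (ℤ × ℤ) :=
  (List.range t).map fun (i : ℕ) => (p.1, p.2 - (i:ℤ) - 1)

/-- horizontal segment going left, excluding start `p`. -/
def leftL (p : ℤ × ℤ) (t : ℕ) : List (ℤ × ℤ) :=
  (List.range t).map fun (i : ℕ) => (p.1 - (i:ℤ) - 1, p.2)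

lemma adj_iff (u v : ℤ × ℤ) : GridAdj u v ↔ (u.1 - v.1).natAbs + (u.2 - v.2).natAbs = 1 :=
  Iff.rfl

lemma length_upL (p : ℤ × ℤ) (t : ℕ) : (upL p t).length = t := by simp [upL]
lemma length_downL (p : ℤ × ℤ) (t : ℕ) : (downL p t).length = t := by simp [downL]
lemma length_leftL (p : ℤ × ℤ) (t : ℕ) : (leftL p t).length = t := by simp [leftL]

lemma mem_upL {p v : ℤ × ℤ} {t : ℕ} (h : v ∈ upL p t) :
    v.1 = p.1 ∧ p.2 + 1 ≤ v.2 ∧ v.2 ≤ p.2 + t := by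
  simp only [upL, List.mem_map, List.mem_range] at h
  obtain ⟨i, hi, rfl⟩ := h
  constructor
  · rfl
  · constructor <;> simp <;> omega

lemma mem_downL {p v : ℤ × ℤ} {t : ℕ} (h : v ∈ downL p t) :
    v.1 = p.1 ∧ p.2 - t ≤ v.2 ∧ v.2 ≤ p.2 - 1 := by
  simp only [downL, List.mem_map, List.mem_range] at h
  obtain ⟨i, hi, rfl⟩ := h
  refine ⟨rfl, ?_, ?_⟩ <;> simp <;> omega

lemma mem_leftL {p v : ℤ × ℤ} {t : ℕ} (h : v ∈ leftL p t) :
    v.2 = p.2 ∧ p.1 - t ≤ v.1 ∧ v.1 ≤ p.1 - 1 := by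
  simp only [leftL, List.mem_map, List.mem_range] at h
  obtain ⟨i, hi, rfl⟩ := h
  refine ⟨rfl, ?_, ?_⟩ <;> simp <;> omega

lemma nodup_upL (p : ℤ × ℤ) (t : ℕ) : (upL p t).Nodup := by
  refine List.Nodup.map ?_ (List.nodup_range (n := t))
  intro i j h
  simp only [Prod.mk.injEq] at h
  omega

lemma nodup_downL (p : ℤ × ℤ) (t : ℕ) : (downL p t).Nodup := by
  refine List.Nodup.map ?_ (List.nodup_range (n := t))
  intro i j h
  simp only [Prod.mk.injEq] at h
  omega

lemma nodup_leftL (p : ℤ × ℤ) (t : ℕ) : (leftL p t).Nodup := by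
  refine List.Nodup.map ?_ (List.nodup_range (n := t))
  intro i j h
  simp only [Prod.mk.injEq] at h
  omega

lemma W_upL (p : ℤ × ℤ) (t : ℕ) : W p (upL p t) (p.1, p.2 + t) := by
  induction t with
  | zero => simpa [upL] using W.nil p
  | succ t ih =>
    have : upL p (t+1) = upL p t ++ [(p.1, p.2 + t + 1)] := by
      simp [upL, List.range_succ]
    rw [this]
    have h2 : (p.1, p.2 + ((t+1:ℕ):ℤ)) = (p.1, p.2 + (t:ℤ) + 1) := by
      simp; push_cast; ring
    rw [h2]
    refine ih.trans (W.single ?_)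
    simp [GridAdj]

lemma W_downL (p : ℤ × ℤ) (t : ℕ) : W p (downL p t) (p.1, p.2 - t) := by
  induction t with
  | zero => simpa [downL] using W.nil p
  | succ t ih =>
    have : downL p (t+1) = downL p t ++ [(p.1, p.2 - t - 1)] := by
      simp [downL, List.range_succ]
    rw [this]
    have h2 : (p.1, p.2 - (t+1:ℕ)) = (p.1, p.2 - t - 1) := by simp; push_cast; ring
    rw [h2]
    refine ih.trans (W.single ?_)
    simp [GridAdj]

lemma W_leftL (p : ℤ × ℤ) (t : ℕ) : W p (leftL p t) (p.1 - t, p.2) := by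
  induction t with
  | zero => simpa [leftL] using W.nil p
  | succ t ih =>
    have : leftL p (t+1) = leftL p t ++ [(p.1 - t - 1, p.2)] := by
      simp [leftL, List.range_succ]
    rw [this]
    have h2 : (p.1 - (t+1:ℕ), p.2) = (p.1 - t - 1, p.2) := by simp; push_cast; ring
    rw [h2]
    refine ih.trans (W.single ?_)
    simp [GridAdj]

end CK3
namespace CK3

/-- One full column piece of the snake body, column `x`, rows 2..H, including entry vertex. -/
def colPiece (H : ℕ) (x : ℤ) : List (ℤ × ℤ) :=
  if x % 2 = 0 then (x, (H:ℤ)) :: downL (x, (H:ℤ)) (H - 2)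
  else (x, 2) :: upL (x, 2) (H - 2)

lemma length_colPiece (H : ℕ) (x : ℤ) (hH : 2 ≤ H) : (colPiece H x).length = H - 1 := by
  unfold colPiece
  split <;> simp [length_downL, length_upL] <;> omega

lemma mem_colPiece {H : ℕ} {x : ℤ} {v : ℤ × ℤ} (hH : 2 ≤ H) (h : v ∈ colPiece H x) :
    v.1 = x ∧ 2 ≤ v.2 ∧ v.2 ≤ H := by
  unfold colPiece at h
  split at h <;> rcases List.mem_cons.mp h with h | h
  · subst h; exact ⟨rfl, by show (2:ℤ) ≤ (H:ℤ); exact_mod_cast hH, le_refl _⟩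
  · have := mem_downL h; simp at this; try omega
  · subst h; exact ⟨rfl, le_refl _, by show (2:ℤ) ≤ (H:ℤ); exact_mod_cast hH⟩
  · have := mem_upL h; simp at this; try omega

lemma nodup_colPiece (H : ℕ) (x : ℤ) : (colPiece H x).Nodup := by
  unfold colPiece
  split
  · refine List.nodup_cons.mpr ⟨fun h => ?_, nodup_downL _ _⟩
    have := mem_downL h; simp at this; try omega
  · refine List.nodup_cons.mpr ⟨fun h => ?_, nodup_upL _ _⟩
    have := mem_upL h; simp at this; try omega

lemma W_colPiece_even {H : ℕ} {x : ℤ} (hH : 2 ≤ H) (hx : x % 2 = 0) (p : ℤ × ℤ)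
    (hp : p = (x - 1, (H:ℤ))) : W p (colPiece H x) (x, 2) := by
  subst hp
  unfold colPiece
  rw [if_pos hx]
  have h1 : W (x - 1, (H:ℤ)) [(x, (H:ℤ))] (x, (H:ℤ)) := W.single (by simp [GridAdj]; try omega)
  have h2 := W_downL (x, (H:ℤ)) (H - 2)
  have h3 : ((x, (H:ℤ)).1, (x, (H:ℤ)).2 - ((H-2 : ℕ):ℤ)) = (x, (2:ℤ)) := by
    simp; omega
  rw [h3] at h2
  exact h1.trans h2

lemma W_colPiece_odd {H : ℕ} {x : ℤ} (hH : 2 ≤ H) (hx : x % 2 = 1) (p : ℤ × ℤ)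
    (hp : p = (x - 1, 2)) : W p (colPiece H x) (x, (H:ℤ)) := by
  subst hp
  unfold colPiece
  rw [if_neg (by omega)]
  have h1 : W (x - 1, (2:ℤ)) [(x, (2:ℤ))] (x, (2:ℤ)) := W.single (by simp [GridAdj]; try omega)
  have h2 := W_upL (x, (2:ℤ)) (H - 2)
  have h3 : ((x, (2:ℤ)).1, (x, (2:ℤ)).2 + ((H-2 : ℕ):ℤ)) = (x, (H:ℤ)) := by
    simp; omega
  rw [h3] at h2
  exact h1.trans h2

/-- Snake body: columns 2..t+1, each covering rows 2..H. -/
def bodyL (H : ℕ) : ℕ → List (ℤ × ℤ)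
  | 0 => []
  | t+1 => bodyL H t ++ colPiece H ((t:ℤ) + 2)

/-- endpoint of the body walk -/
def bodyEnd (H : ℕ) (t : ℕ) : ℤ × ℤ := ((t:ℤ) + 1, if t % 2 = 0 then (H:ℤ) else 2)

lemma length_bodyL (H : ℕ) (t : ℕ) (hH : 2 ≤ H) : (bodyL H t).length = t * (H - 1) := by
  induction t with
  | zero => simp [bodyL]
  | succ t ih =>
    simp only [bodyL, List.length_append, ih, length_colPiece H _ hH]
    ring

lemma mem_bodyL {H t : ℕ} {v : ℤ × ℤ} (hH : 2 ≤ H) (h : v ∈ bodyL H t) :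
    2 ≤ v.1 ∧ v.1 ≤ (t:ℤ) + 1 ∧ 2 ≤ v.2 ∧ v.2 ≤ H := by
  induction t with
  | zero => simp [bodyL] at h
  | succ t ih =>
    simp only [bodyL, List.mem_append] at h
    rcases h with h | h
    · have := ih h; push_cast; omega
    · have := mem_colPiece hH h; push_cast; omega

lemma nodup_bodyL (H t : ℕ) (hH : 2 ≤ H) : (bodyL H t).Nodup := by
  induction t with
  | zero => simp [bodyL]
  | succ t ih =>
    refine List.nodup_append'.mpr ⟨ih, nodup_colPiece _ _, ?_⟩
    intro v hv hv'
    have h1 := mem_bodyL hH hv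
    have h2 := mem_colPiece hH hv'
    omega

lemma W_bodyL (H t : ℕ) (hH : 2 ≤ H) : W (1, (H:ℤ)) (bodyL H t) (bodyEnd H t) := by
  induction t with
  | zero => exact W.nil _
  | succ t ih =>
    unfold bodyEnd at *
    rcases Nat.even_or_odd t with he | ho
    · have ht : t % 2 = 0 := Nat.even_iff.mp he
      rw [if_pos ht] at ih
      have hx : ((t:ℤ) + 2) % 2 = 0 := by omega
      have h2 := ih.trans (W_colPiece_even hH hx _ (by simp; omega))
      have h3 : (((t:ℤ) + 2), (2:ℤ)) = (((t+1:ℕ):ℤ) + 1, if (t+1) % 2 = 0 then (H:ℤ) else 2) := by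
        rw [if_neg (by omega)]; simp; push_cast; ring
      rw [h3] at h2
      exact h2
    · have ht : t % 2 = 1 := Nat.odd_iff.mp ho
      rw [if_neg (by omega)] at ih
      have hx : ((t:ℤ) + 2) % 2 = 1 := by omega
      have h2 := ih.trans (W_colPiece_odd hH hx _ (by simp; omega))
      have h3 : (((t:ℤ) + 2), (H:ℤ)) = (((t+1:ℕ):ℤ) + 1, if (t+1) % 2 = 0 then (H:ℤ) else 2) := by
        rw [if_pos (by omega)]; simp; push_cast; ring
      rw [h3] at h2
      exact h2

end CK3
namespace CK3

/-- Zigzag over columns c, c+1, covering rows 1..2s, as a walk from (c, 2s+1) to (c,1). -/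
def zigL (c : ℤ) : ℕ → List (ℤ × ℤ)
  | 0 => []
  | s+1 => [(c, 2*(s:ℤ)+2), (c+1, 2*(s:ℤ)+2), (c+1, 2*(s:ℤ)+1), (c, 2*(s:ℤ)+1)] ++ zigL c s

lemma length_zigL (c : ℤ) (s : ℕ) : (zigL c s).length = 4 * s := by
  induction s with
  | zero => simp [zigL]
  | succ s ih => simp [zigL, ih]; ring

lemma mem_zigL {c : ℤ} {s : ℕ} {v : ℤ × ℤ} (h : v ∈ zigL c s) :
    (v.1 = c ∨ v.1 = c + 1) ∧ 1 ≤ v.2 ∧ v.2 ≤ 2 * s := by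
  induction s with
  | zero => simp [zigL] at h
  | succ s ih =>
    rw [zigL] at h
    simp only [List.mem_append, List.mem_cons, List.mem_singleton, List.not_mem_nil, or_false] at h
    rcases h with (h | h | h | h) | h
    all_goals first
    | (subst h; refine ⟨?_, ?_, ?_⟩ <;> simp <;> push_cast <;> omega)
    | (have := ih h; push_cast; omega)

lemma nodup_zigL (c : ℤ) (s : ℕ) : (zigL c s).Nodup := by
  induction s with
  | zero => simp [zigL]
  | succ s ih =>
    rw [zigL]
    refine List.nodup_append'.mpr ⟨?_, ih, ?_⟩
    · simp [List.nodup_cons, Prod.ext_iff] <;> omega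
    · intro v hv hv'
      have h2 := mem_zigL hv'
      simp only [List.mem_cons, List.mem_singleton, List.not_mem_nil, or_false] at hv
      rcases hv with rfl | rfl | rfl | rfl <;> simp at h2 <;> omega

lemma W_zigL (c : ℤ) (s : ℕ) : W (c, 2*(s:ℤ)+1) (zigL c s) (c, 1) := by
  induction s with
  | zero => simpa [zigL] using W.nil (c, 1)
  | succ s ih =>
    have step : W (c, 2*((s:ℕ)+1:ℕ)+1)
        [(c, 2*(s:ℤ)+2), (c+1, 2*(s:ℤ)+2), (c+1, 2*(s:ℤ)+1), (c, 2*(s:ℤ)+1)]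
        (c, 2*(s:ℤ)+1) := by
      constructor
      · refine List.chain_cons.mpr ⟨by simp [GridAdj] <;> push_cast <;> omega, ?_⟩
        refine List.chain_cons.mpr ⟨by simp [GridAdj] <;> omega, ?_⟩
        refine List.chain_cons.mpr ⟨by simp [GridAdj] <;> omega, ?_⟩
        refine List.chain_cons.mpr ⟨by simp [GridAdj] <;> omega, List.Chain.nil⟩
      · rfl
    exact step.trans ih

end CK3
namespace CK3

/-- The column-`c` piece: from `(c,H)` down to `(c, 2s+1)`. -/
def pieceC (c H s : ℕ) : List (ℤ × ℤ) :=
  ((c:ℤ), (H:ℤ)) :: downL ((c:ℤ), (H:ℤ)) (H - 1 - 2*s)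

lemma mem_pieceC {c H s : ℕ} {v : ℤ × ℤ} (hs : 2*s + 1 ≤ H) (h : v ∈ pieceC c H s) :
    v.1 = c ∧ 2*(s:ℤ) + 1 ≤ v.2 ∧ v.2 ≤ H := by
  rcases List.mem_cons.mp h with rfl | h
  · refine ⟨rfl, ?_, le_refl _⟩
    show 2*(s:ℤ) + 1 ≤ (H:ℤ)
    exact_mod_cast hs
  · have := mem_downL h
    simp at this
    push_cast
    omega

lemma nodup_pieceC (c H s : ℕ) : (pieceC c H s).Nodup := by
  refine List.nodup_cons.mpr ⟨fun h => ?_, nodup_downL _ _⟩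
  have := mem_downL h; simp at this

lemma length_pieceC (c H s : ℕ) : (pieceC c H s).length = H - 1 - 2*s + 1 := by
  simp [pieceC, length_downL]

lemma W_pieceC {c H s : ℕ} (hc : 2 ≤ c) (hs : 2*s + 1 ≤ H) :
    W ((c:ℤ) - 1, (H:ℤ)) (pieceC c H s) ((c:ℤ), 2*(s:ℤ)+1) := by
  have h1 : W ((c:ℤ) - 1, (H:ℤ)) [((c:ℤ), (H:ℤ))] ((c:ℤ), (H:ℤ)) :=
    W.single (by simp [GridAdj] <;> omega)
  have h2 := W_downL ((c:ℤ), (H:ℤ)) (H - 1 - 2*s)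
  have h3 : (((c:ℤ), (H:ℤ)).1, ((c:ℤ), (H:ℤ)).2 - ((H - 1 - 2*s : ℕ):ℤ)) = ((c:ℤ), 2*(s:ℤ)+1) := by
    simp; push_cast; omega
  rw [h3] at h2
  exact h1.trans h2

/-- The `Z`-cycle: `c` columns of height `H` plus a zigzag of `2s` extra cells in
column `c+1` interleaved with column `c`. -/
def zcyc (c H s : ℕ) : List (ℤ × ℤ) :=
  ((1:ℤ), (1:ℤ)) :: (upL (1,1) (H-1) ++ (bodyL H (c-2) ++ (pieceC c H s ++
    (zigL (c:ℤ) s ++ leftL ((c:ℤ), 1) (c-2)))))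

lemma zcyc_spec {m N : ℤ} {c H s : ℕ} (hc2 : 2 ≤ c) (hce : c % 2 = 0) (hH : 2 ≤ H)
    (hHN : (H:ℤ) ≤ N) (hsH : 2*s + 1 ≤ H) (hcm : (c:ℤ) ≤ m)
    (hs : s ≠ 0 → (c:ℤ) + 1 ≤ m) :
    IsGridCycle (RectV m N) (zcyc c H s) ∧ (zcyc c H s).length = c * H + 2*s := by
  have hm2 : (2:ℤ) ≤ m := le_trans (by exact_mod_cast hc2) hcm
  have hN2 : (2:ℤ) ≤ N := le_trans (by exact_mod_cast hH) hHN
  -- the walk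
  have wA := W_upL ((1:ℤ),(1:ℤ)) (H-1)
  have eA : (((1:ℤ),(1:ℤ)).1, ((1:ℤ),(1:ℤ)).2 + ((H-1:ℕ):ℤ)) = ((1:ℤ), (H:ℤ)) := by
    simp; push_cast; omega
  rw [eA] at wA
  have wB := W_bodyL H (c-2) hH
  have eB : bodyEnd H (c-2) = ((c:ℤ) - 1, (H:ℤ)) := by
    unfold bodyEnd
    rw [if_pos (by omega)]
    simp; push_cast; omega
  rw [eB] at wB
  have wC := W_pieceC (c := c) (H := H) (s := s) hc2 hsH
  have wD := W_zigL (c:ℤ) s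
  have wE := W_leftL ((c:ℤ), (1:ℤ)) (c-2)
  have eE : (((c:ℤ),(1:ℤ)).1 - ((c-2:ℕ):ℤ), ((c:ℤ),(1:ℤ)).2) = ((2:ℤ), (1:ℤ)) := by
    simp; push_cast; omega
  rw [eE] at wE
  have wF : W ((2:ℤ),(1:ℤ)) [((1:ℤ),(1:ℤ))] ((1:ℤ),(1:ℤ)) :=
    W.single (by simp [GridAdj] <;> omega)
  have wAll : W ((1:ℤ),(1:ℤ))
      (upL (1,1) (H-1) ++ (bodyL H (c-2) ++ (pieceC c H s ++
        (zigL (c:ℤ) s ++ leftL ((c:ℤ), 1) (c-2))))) ((2:ℤ),(1:ℤ)) :=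
    wA.trans (wB.trans (wC.trans (wD.trans wE)))
  -- membership helper
  have hmem : ∀ v ∈ zcyc c H s, v ∈ RectV m N := by
    intro v hv
    simp only [zcyc, List.mem_cons, List.mem_append] at hv
    simp only [RectV, Set.mem_setOf_eq]
    rcases hv with rfl | hv | hv | hv | hv | hv
    · simp; omega
    · have := mem_upL hv; simp at this; push_cast at this ⊢; omega
    · have := mem_bodyL hH hv; push_cast at this ⊢; omega
    · have := mem_pieceC hsH hv; push_cast at this ⊢; omega
    · have h2 := mem_zigL hv
      rcases Nat.eq_zero_or_pos s with rfl | hs0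
      · simp at h2; omega
      · have := hs (by omega); push_cast at h2 ⊢; omega
    · have := mem_leftL hv; simp at this; push_cast at this ⊢; omega
  refine ⟨⟨?_, hmem, ?_, ?_⟩, ?_⟩
  · -- length ≥ 3
    simp [zcyc, length_upL, length_bodyL H _ hH, length_pieceC, length_zigL, length_leftL]
    omega
  · -- nodup
    have dAB : ∀ v ∈ upL ((1:ℤ),(1:ℤ)) (H-1), v ∉ bodyL H (c-2) ++ (pieceC c H s ++
        (zigL (c:ℤ) s ++ leftL ((c:ℤ), 1) (c-2))) := by
      intro v hv hv'
      have h1 := mem_upL hv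
      simp only [List.mem_append] at hv'
      rcases hv' with h | h | h | h
      · have := mem_bodyL hH h; omega
      · have := mem_pieceC hsH h; simp at h1; omega
      · have := mem_zigL h; simp at h1; omega
      · have := mem_leftL h; simp at h1 this; omega
    have dBC : ∀ v ∈ bodyL H (c-2), v ∉ pieceC c H s ++
        (zigL (c:ℤ) s ++ leftL ((c:ℤ), 1) (c-2)) := by
      intro v hv hv'
      have h1 := mem_bodyL hH hv
      simp only [List.mem_append] at hv'
      rcases hv' with h | h | h
      · have := mem_pieceC hsH h; push_cast at h1; omega
      · have := mem_zigL h; push_cast at h1; omega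
      · have := mem_leftL h; simp at this; omega
    have dCD : ∀ v ∈ pieceC c H s, v ∉ zigL (c:ℤ) s ++ leftL ((c:ℤ), 1) (c-2) := by
      intro v hv hv'
      have h1 := mem_pieceC hsH hv
      simp only [List.mem_append] at hv'
      rcases hv' with h | h
      · have := mem_zigL h; omega
      · have := mem_leftL h; simp at this; push_cast at this; omega
    have dDE : ∀ v ∈ zigL (c:ℤ) s, v ∉ leftL ((c:ℤ), 1) (c-2) := by
      intro v hv hv'
      have h1 := mem_zigL hv
      have := mem_leftL hv'; simp at this; push_cast at this; omega
    refine List.nodup_cons.mpr ⟨?_, ?_⟩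
    · intro hv
      simp only [List.mem_append] at hv
      rcases hv with h | h | h | h | h
      · have := mem_upL h; simp at this <;> omega
      · have := mem_bodyL hH h; simp at this <;> omega
      · have := mem_pieceC hsH h; simp at this <;> omega
      · have := mem_zigL h; simp at this <;> omega
      · have := mem_leftL h; simp at this <;> omega
    · refine List.nodup_append'.mpr ⟨nodup_upL _ _, ?_, dAB⟩
      refine List.nodup_append'.mpr ⟨nodup_bodyL _ _ hH, ?_, dBC⟩
      refine List.nodup_append'.mpr ⟨nodup_pieceC _ _ _, ?_, dCD⟩
      exact List.nodup_append'.mpr ⟨nodup_zigL _ _, nodup_leftL _ _, dDE⟩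
  · -- chain'
    have : zcyc c H s ++ (zcyc c H s).take 1 =
        ((1:ℤ),(1:ℤ)) :: ((upL (1,1) (H-1) ++ (bodyL H (c-2) ++ (pieceC c H s ++
          (zigL (c:ℤ) s ++ leftL ((c:ℤ), 1) (c-2))))) ++ [((1:ℤ),(1:ℤ))]) := by
      simp [zcyc]
    rw [this]
    exact (wAll.trans wF).1
  · -- length
    simp only [zcyc, List.length_cons, List.length_append, length_upL,
      length_bodyL H _ hH, length_pieceC, length_zigL, length_leftL]
    obtain ⟨a, rfl⟩ : ∃ a, c = a + 2 := ⟨c - 2, by omega⟩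
    obtain ⟨e, rfl⟩ : ∃ e, H = e + 2*s + 1 := ⟨H - 2*s - 1, by omega⟩
    have e1 : a + 2 - 2 = a := by omega
    have e2 : e + 2*s + 1 - 1 = e + 2*s := by omega
    have e3 : e + 2*s - 2*s = e := by omega
    rw [e1, e2, e3]
    ring

end CK3
namespace CK3

/-- The tab cycle: `c` full columns of height `H` plus a 2-wide tab of height `h`
on columns `c+1`, `c+2`. -/
def tabcyc (c H h : ℕ) : List (ℤ × ℤ) :=
  ((1:ℤ), (1:ℤ)) :: (upL (1,1) (H-1) ++ (bodyL H (c-2) ++ (colPiece H (c:ℤ) ++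
    ((((c:ℤ)+1, (2:ℤ)) :: upL ((c:ℤ)+1, 2) (h-2)) ++
      ((((c:ℤ)+2, (h:ℤ)) :: downL ((c:ℤ)+2, (h:ℤ)) (h-1)) ++
        ([((c:ℤ)+1, (1:ℤ))] ++ leftL ((c:ℤ)+1, 1) (c-1)))))))

lemma tabcyc_spec {m N : ℤ} {c H h : ℕ} (hc2 : 2 ≤ c) (hce : c % 2 = 0) (hH : 2 ≤ H)
    (hHN : (H:ℤ) ≤ N) (hh2 : 2 ≤ h) (hhN : (h:ℤ) ≤ N) (hcm : (c:ℤ) + 2 ≤ m) :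
    IsGridCycle (RectV m N) (tabcyc c H h) ∧ (tabcyc c H h).length = c * H + 2 * h := by
  have hm2 : (2:ℤ) ≤ m := by omega
  have hN2 : (2:ℤ) ≤ N := le_trans (by exact_mod_cast hH) hHN
  set T1 : List (ℤ × ℤ) := ((c:ℤ)+1, (2:ℤ)) :: upL ((c:ℤ)+1, 2) (h-2) with hT1
  set T2 : List (ℤ × ℤ) := ((c:ℤ)+2, (h:ℤ)) :: downL ((c:ℤ)+2, (h:ℤ)) (h-1) with hT2
  -- membership lemmas for the tab pieces
  have memT1 : ∀ v ∈ T1, v.1 = (c:ℤ)+1 ∧ 2 ≤ v.2 ∧ v.2 ≤ (h:ℤ) := by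
    intro v hv
    rcases List.mem_cons.mp hv with rfl | hv
    · exact ⟨rfl, by norm_num, by show (2:ℤ) ≤ (h:ℤ); exact_mod_cast hh2⟩
    · have := mem_upL hv; simp at this; push_cast; omega
  have memT2 : ∀ v ∈ T2, v.1 = (c:ℤ)+2 ∧ 1 ≤ v.2 ∧ v.2 ≤ (h:ℤ) := by
    intro v hv
    rcases List.mem_cons.mp hv with rfl | hv
    · exact ⟨rfl, by show (1:ℤ) ≤ (h:ℤ); exact_mod_cast by omega, le_refl _⟩
    · have := mem_downL hv; simp at this; push_cast; omega
  have memC : ∀ v ∈ colPiece H (c:ℤ), v.1 = (c:ℤ) ∧ 2 ≤ v.2 ∧ v.2 ≤ (H:ℤ) :=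
    fun v hv => mem_colPiece hH hv
  -- the walk
  have wA := W_upL ((1:ℤ),(1:ℤ)) (H-1)
  have eA : (((1:ℤ),(1:ℤ)).1, ((1:ℤ),(1:ℤ)).2 + ((H-1:ℕ):ℤ)) = ((1:ℤ), (H:ℤ)) := by
    simp; push_cast; omega
  rw [eA] at wA
  have wB := W_bodyL H (c-2) hH
  have eB : bodyEnd H (c-2) = ((c:ℤ) - 1, (H:ℤ)) := by
    unfold bodyEnd
    rw [if_pos (by omega)]
    simp; push_cast; omega
  rw [eB] at wB
  have wC : W ((c:ℤ)-1, (H:ℤ)) (colPiece H (c:ℤ)) ((c:ℤ), 2) :=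
    W_colPiece_even hH (by omega) _ rfl
  have wT1 : W ((c:ℤ), 2) T1 ((c:ℤ)+1, (h:ℤ)) := by
    have h1 : W ((c:ℤ), 2) [((c:ℤ)+1, (2:ℤ))] ((c:ℤ)+1, (2:ℤ)) :=
      W.single (by simp [GridAdj] <;> omega)
    have h2 := W_upL ((c:ℤ)+1, (2:ℤ)) (h-2)
    have h3 : ((((c:ℤ)+1, (2:ℤ))).1, (((c:ℤ)+1, (2:ℤ))).2 + ((h-2:ℕ):ℤ)) = ((c:ℤ)+1, (h:ℤ)) := by
      simp; push_cast; omega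
    rw [h3] at h2
    exact h1.trans h2
  have wT2 : W ((c:ℤ)+1, (h:ℤ)) T2 ((c:ℤ)+2, 1) := by
    have h1 : W ((c:ℤ)+1, (h:ℤ)) [((c:ℤ)+2, (h:ℤ))] ((c:ℤ)+2, (h:ℤ)) :=
      W.single (by simp [GridAdj] <;> omega)
    have h2 := W_downL ((c:ℤ)+2, (h:ℤ)) (h-1)
    have h3 : ((((c:ℤ)+2, (h:ℤ))).1, (((c:ℤ)+2, (h:ℤ))).2 - ((h-1:ℕ):ℤ)) = ((c:ℤ)+2, 1) := by
      simp; push_cast; omega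
    rw [h3] at h2
    exact h1.trans h2
  have wT3 : W ((c:ℤ)+2, 1) [((c:ℤ)+1, (1:ℤ))] ((c:ℤ)+1, 1) :=
    W.single (by simp [GridAdj] <;> omega)
  have wE := W_leftL ((c:ℤ)+1, (1:ℤ)) (c-1)
  have eE : ((((c:ℤ)+1,(1:ℤ))).1 - ((c-1:ℕ):ℤ), (((c:ℤ)+1,(1:ℤ))).2) = ((2:ℤ), (1:ℤ)) := by
    simp; push_cast; omega
  rw [eE] at wE
  have wF : W ((2:ℤ),(1:ℤ)) [((1:ℤ),(1:ℤ))] ((1:ℤ),(1:ℤ)) :=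
    W.single (by simp [GridAdj] <;> omega)
  have wAll : W ((1:ℤ),(1:ℤ))
      (upL (1,1) (H-1) ++ (bodyL H (c-2) ++ (colPiece H (c:ℤ) ++
        (T1 ++ (T2 ++ ([((c:ℤ)+1, (1:ℤ))] ++ leftL ((c:ℤ)+1, 1) (c-1))))))) ((2:ℤ),(1:ℤ)) :=
    wA.trans (wB.trans (wC.trans (wT1.trans (wT2.trans (wT3.trans wE)))))
  have hmem : ∀ v ∈ tabcyc c H h, v ∈ RectV m N := by
    intro v hv
    simp only [tabcyc, List.mem_cons, List.mem_append, List.mem_singleton] at hv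
    simp only [RectV, Set.mem_setOf_eq]
    rcases hv with rfl | hv | hv | hv | hv | hv | hv | hv
    · simp <;> omega
    · have := mem_upL hv; simp at this; push_cast at this ⊢; omega
    · have := mem_bodyL hH hv; push_cast at this ⊢; omega
    · have := memC v hv; push_cast at this ⊢; omega
    · have := memT1 v (List.mem_cons.mpr hv); push_cast at this ⊢; omega
    · have := memT2 v (List.mem_cons.mpr hv); push_cast at this ⊢; omega
    · rcases hv with rfl | hv
      · refine ⟨by push_cast; omega, by push_cast; omega, by norm_num, by omega⟩
      · simp at hv
    · have := mem_leftL hv; simp at this; push_cast at this ⊢; omega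
  have hlen : (tabcyc c H h).length = c * H + 2 * h := by
    simp only [tabcyc, List.length_cons, List.length_append, length_upL,
      length_bodyL H _ hH, length_colPiece H _ hH, length_downL, length_upL,
      length_leftL, List.length_singleton, List.length_nil]
    obtain ⟨a, rfl⟩ : ∃ a, c = a + 2 := ⟨c - 2, by omega⟩
    obtain ⟨b, rfl⟩ : ∃ b, H = b + 2 := ⟨H - 2, by omega⟩
    obtain ⟨g, rfl⟩ : ∃ g, h = g + 2 := ⟨h - 2, by omega⟩
    have e1 : a + 2 - 2 = a := by omega
    have e2 : b + 2 - 1 = b + 1 := by omega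
    have e3 : g + 2 - 2 = g := by omega
    have e4 : g + 2 - 1 = g + 1 := by omega
    have e5 : a + 2 - 1 = a + 1 := by omega
    rw [e1, e2, e3, e4, e5]
    ring
  refine ⟨⟨?_, hmem, ?_, ?_⟩, hlen⟩
  · -- length ≥ 3
    rw [hlen]
    have := Nat.mul_le_mul hc2 hH
    omega
  · -- nodup
    refine List.nodup_cons.mpr ⟨?_, ?_⟩
    · intro hv
      simp only [List.mem_append, List.mem_singleton] at hv
      rcases hv with h' | h' | h' | h' | h' | h' | h'
      · have := mem_upL h'; simp at this <;> omega
      · have := mem_bodyL hH h'; simp at this <;> omega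
      · have := memC _ h'; simp at this <;> omega
      · have := memT1 _ h'; simp at this <;> omega
      · have := memT2 _ h'; simp at this <;> omega
      · have : (1:ℤ) = (c:ℤ)+1 := congrArg Prod.fst h'; omega
      · have := mem_leftL h'; simp at this <;> omega
    · refine List.nodup_append'.mpr ⟨nodup_upL _ _, ?_, ?_⟩
      · refine List.nodup_append'.mpr ⟨nodup_bodyL _ _ hH, ?_, ?_⟩
        · refine List.nodup_append'.mpr ⟨nodup_colPiece _ _, ?_, ?_⟩
          · refine List.nodup_append'.mpr ⟨?_, ?_, ?_⟩
            · refine List.nodup_cons.mpr ⟨fun h' => ?_, nodup_upL _ _⟩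
              have := mem_upL h'; simp at this
            · refine List.nodup_append'.mpr ⟨?_, ?_, ?_⟩
              · refine List.nodup_cons.mpr ⟨fun h' => ?_, nodup_downL _ _⟩
                have := mem_downL h'; simp at this
              · refine List.nodup_append'.mpr ⟨List.nodup_singleton _, nodup_leftL _ _, ?_⟩
                intro v hv hv'
                simp only [List.mem_singleton] at hv
                subst hv
                have := mem_leftL hv'; simp at this <;> omega
              · intro v hv hv'
                have h1 := memT2 v hv
                simp only [List.mem_append, List.mem_singleton] at hv'
                rcases hv' with rfl | h'
                · simp at h1 <;> omega
                · have := mem_leftL h'; simp at this <;> omega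
            · intro v hv hv'
              have h1 := memT1 v hv
              simp only [List.mem_append, List.mem_singleton] at hv'
              rcases hv' with h' | rfl | h'
              · have := memT2 v h'; omega
              · simp at h1 <;> omega
              · have := mem_leftL h'; simp at this <;> omega
          · intro v hv hv'
            have h1 := memC v hv
            simp only [List.mem_append, List.mem_singleton] at hv'
            rcases hv' with h' | h' | rfl | h'
            · have := memT1 v h'; omega
            · have := memT2 v h'; omega
            · simp at h1 <;> omega
            · have := mem_leftL h'; simp at this <;> omega
        · intro v hv hv'
          have h1 := mem_bodyL hH hv
          simp only [List.mem_append, List.mem_singleton] at hv'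
          rcases hv' with h' | h' | h' | rfl | h'
          · have := memC v h'; omega
          · have := memT1 v h'; omega
          · have := memT2 v h'; omega
          · push_cast at h1; omega
          · have := mem_leftL h'; simp at this <;> omega
      · intro v hv hv'
        have h1 := mem_upL hv
        simp at h1
        simp only [List.mem_append, List.mem_singleton] at hv'
        rcases hv' with h' | h' | h' | h' | rfl | h'
        · have := mem_bodyL hH h'; omega
        · have := memC v h'; omega
        · have := memT1 v h'; omega
        · have := memT2 v h'; omega
        · simp at h1 <;> omega
        · have := mem_leftL h'; simp at this <;> omega
  · -- chain'
    have heq : tabcyc c H h ++ (tabcyc c H h).take 1 =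
        ((1:ℤ),(1:ℤ)) :: ((upL (1,1) (H-1) ++ (bodyL H (c-2) ++ (colPiece H (c:ℤ) ++
          (T1 ++ (T2 ++ ([((c:ℤ)+1, (1:ℤ))] ++ leftL ((c:ℤ)+1, 1) (c-1))))))) ++
            [((1:ℤ),(1:ℤ))]) := by
      simp [tabcyc, hT1, hT2]
    rw [heq]
    exact (wAll.trans wF).1

end CK3
namespace CK3

lemma gridAdj_swap {a b : ℤ × ℤ} (h : GridAdj a b) : GridAdj a.swap b.swap := by
  simp only [GridAdj, Prod.swap] at *
  omega

lemma cycle_transpose {m N : ℤ} {l : List (ℤ × ℤ)} (h : IsGridCycle (RectV N m) l) :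
    IsGridCycle (RectV m N) (l.map Prod.swap) ∧ (l.map Prod.swap).length = l.length := by
  obtain ⟨h3, hmem, hnd, hch⟩ := h
  refine ⟨⟨by simpa using h3, ?_, hnd.map Prod.swap_injective, ?_⟩, by simp⟩
  · intro v hv
    obtain ⟨u, hu, rfl⟩ := List.mem_map.mp hv
    have := hmem u hu
    simp only [RectV, Set.mem_setOf_eq, Prod.swap] at *
    omega
  · rw [← List.map_take, ← List.map_append]
    exact (List.isChain_map _).mpr (hch.imp fun a b hab => gridAdj_swap hab)

/-- Main 2D construction lemma. -/
lemma exists_2d_cycle {m N : ℤ} (hm : 2 ≤ m) (hN : 2 ≤ N) {k : ℕ} (hke : Even k)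
    (hk4 : 4 ≤ k) (hkmn : (k:ℤ) ≤ m * N) :
    ∃ l, IsGridCycle (RectV m N) l ∧ l.length = k := by
  set M := m.toNat with hM
  set Nn := N.toNat with hNn
  have hMm : (M:ℤ) = m := Int.toNat_of_nonneg (by omega)
  have hNnN : (Nn:ℤ) = N := Int.toNat_of_nonneg (by omega)
  have hM2 : 2 ≤ M := by omega
  have hNn2 : 2 ≤ Nn := by omega
  have hkMN : k ≤ M * Nn := by
    have : ((M * Nn : ℕ) : ℤ) = m * N := by push_cast; rw [hMm, hNnN]
    omega
  have hk2 : k % 2 = 0 := Nat.even_iff.mp hke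
  by_cases hc1 : k ≤ 2 * Nn
  · -- small: vertical 2 × (k/2) rectangle
    refine ⟨zcyc 2 (k/2) 0, ?_⟩
    have := zcyc_spec (m := m) (N := N) (c := 2) (H := k/2) (s := 0)
      (by omega) (by omega) (by omega) (by omega) (by omega) hm (by omega)
    refine ⟨this.1, ?_⟩
    rw [this.2]; omega
  by_cases hc2 : k ≤ 2 * M
  · -- small horizontal: transpose
    have hsp := zcyc_spec (m := N) (N := m) (c := 2) (H := k/2) (s := 0)
      (by omega) (by omega) (by omega) (by omega) (by omega) hN (by omega)
    have htr := cycle_transpose (m := m) (N := N) hsp.1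
    refine ⟨_, htr.1, ?_⟩
    rw [htr.2, hsp.2]; omega
  -- big case
  push_neg at hc1 hc2
  obtain ⟨q, r, hqr, hr⟩ : ∃ q r, k = 2 * Nn * q + r ∧ r < 2 * Nn :=
    ⟨k / (2 * Nn), k % (2 * Nn), by rw [Nat.div_add_mod], Nat.mod_lt _ (by omega)⟩
  have hq1 : 1 ≤ q := by
    rcases Nat.eq_zero_or_pos q with rfl | h
    · simp at hqr; omega
    · exact h
  set c := 2 * q with hc
  have hc2' : 2 ≤ c := by omega
  have hce : c % 2 = 0 := by omega
  have h1 : c * Nn + r = k := by rw [hc, hqr]; ring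
  have hre : r % 2 = 0 := by
    have : (c * Nn) % 2 = 0 := by
      have : c * Nn = 2 * (q * Nn) := by rw [hc]; ring
      omega
    omega
  have hcM : c ≤ M := by
    have hcn : c * Nn ≤ M * Nn := by
      calc c * Nn ≤ k := by omega
      _ ≤ M * Nn := hkMN
    exact Nat.le_of_mul_le_mul_right hcn (by omega)
  by_cases hw1 : r < Nn
  · -- zigzag case
    have hrs : r ≠ 0 → c < M := by
      intro hr0
      have hcn : c * Nn < M * Nn := by
        calc c * Nn < k := by omega
        _ ≤ M * Nn := hkMN
      exact Nat.lt_of_mul_lt_mul_right hcn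
    have := zcyc_spec (m := m) (N := N) (c := c) (H := Nn) (s := r / 2)
      hc2' hce hNn2 (by omega) (by omega) (by omega)
      (fun h0 => by have := hrs (by omega); omega)
    refine ⟨_, this.1, ?_⟩
    rw [this.2]; omega
  push_neg at hw1
  have hcc : (c + 1) * Nn = c * Nn + Nn := by ring
  by_cases hw2 : r = Nn
  · -- k = (c+1) * Nn, Nn even
    have hNne : Nn % 2 = 0 := by omega
    by_cases hM3 : c + 2 ≤ M
    · -- tab with h = Nn / 2
      have hN4 : 4 ≤ Nn := by
        rcases Nat.lt_or_ge Nn 4 with h | h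
        · -- Nn = 2 impossible: k ≤ M * Nn = 2M < k
          exfalso
          have : Nn = 2 := by omega
          rw [this] at hkMN
          omega
        · exact h
      have := tabcyc_spec (m := m) (N := N) (c := c) (H := Nn) (h := Nn / 2)
        hc2' hce hNn2 (by omega) (by omega) (by omega) (by omega)
      refine ⟨_, this.1, ?_⟩
      rw [this.2]; omega
    · -- M = c + 1, k = M * Nn : transposed full snake
      have hMc : M = c + 1 := by
        have : c + 1 ≤ M := by
          have hcn : c * Nn < M * Nn := by
            calc c * Nn < k := by omega
            _ ≤ M * Nn := hkMN
          have := Nat.lt_of_mul_lt_mul_right hcn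
          omega
        omega
      have hkeq : k = Nn * M := by
        rw [hMc]
        calc k = c * Nn + Nn := by omega
        _ = Nn * (c + 1) := by ring
      have hsp := zcyc_spec (m := N) (N := m) (c := Nn) (H := M) (s := 0)
        hNn2 hNne hM2 (by omega) (by omega) (by omega) (by omega)
      have htr := cycle_transpose (m := m) (N := N) hsp.1
      refine ⟨_, htr.1, ?_⟩
      rw [htr.2, hsp.2]; omega
  · -- Nn < r < 2 Nn : tab case
    have hrN : Nn < r := by omega
    have hM3 : c + 2 ≤ M := by
      have hcn : (c + 1) * Nn < M * Nn := by
        calc (c+1) * Nn = c * Nn + Nn := hcc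
        _ < k := by omega
        _ ≤ M * Nn := hkMN
      have := Nat.lt_of_mul_lt_mul_right hcn
      omega
    have := tabcyc_spec (m := m) (N := N) (c := c) (H := Nn) (h := r / 2)
      hc2' hce hNn2 (by omega) (by omega) (by omega) (by omega)
    refine ⟨_, this.1, ?_⟩
    rw [this.2]; omega

end CK3
namespace CK3

/-- Inverse of the folding map: sends `(x, j)` to the 3D point it folds from. -/
def unfold3 (n : ℤ) (p : ℤ × ℤ) : ℤ × ℤ × ℤ :=
  (p.1, if Odd ((p.2 - 1) / n + 1) then p.2 - n * ((p.2 - 1) / n)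
        else n * ((p.2 - 1) / n + 1) - p.2 + 1, (p.2 - 1) / n + 1)

lemma grid3adj_symm {u v : ℤ × ℤ × ℤ} (h : Grid3Adj u v) : Grid3Adj v u := by
  simp only [Grid3Adj] at *; omega

lemma unfold3_step (n x j : ℤ) (hn : 1 ≤ n) :
    Grid3Adj (unfold3 n (x, j)) (unfold3 n (x, j + 1)) := by
  simp only [unfold3, Grid3Adj, add_sub_cancel_right]
  have hd := Int.mul_ediv_add_emod (j - 1) n
  have hr0 : 0 ≤ (j - 1) % n := Int.emod_nonneg _ (by omega)
  have hrn : (j - 1) % n < n := Int.emod_lt_of_pos _ (by omega)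
  set d := (j - 1) / n with hdset
  set r := (j - 1) % n with hrset
  by_cases hcase : r = n - 1
  · have h2 : j / n = d + 1 ∧ j % n = 0 := by
      rw [Int.ediv_emod_unique (by omega : (0:ℤ) < n)]
      have : n * (d + 1) = n * d + n := by ring
      omega
    rw [h2.1]
    have hnd : n * (d + 1) = n * d + n := by ring
    have hnd2 : n * (d + 1 + 1) = n * d + 2 * n := by ring
    rcases Int.even_or_odd (d + 1) with he | ho
    · have h3 : ¬ Odd (d + 1) := Int.not_odd_iff_even.mpr he
      have h4 : Odd (d + 1 + 1) := by obtain ⟨t, ht⟩ := he; exact ⟨t, by omega⟩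
      rw [if_neg h3, if_pos h4]
      omega
    · have h4 : ¬ Odd (d + 1 + 1) := by
        rw [Int.not_odd_iff_even, Int.even_add_one]
        exact Int.not_even_iff_odd.mpr ho
      rw [if_pos ho, if_neg h4]
      omega
  · have h2 : j / n = d ∧ j % n = r + 1 := by
      rw [Int.ediv_emod_unique (by omega : (0:ℤ) < n)]
      omega
    rw [h2.1]
    rcases Int.even_or_odd (d + 1) with he | ho
    · have h3 : ¬ Odd (d + 1) := Int.not_odd_iff_even.mpr he
      rw [if_neg h3, if_neg h3]
      omega
    · rw [if_pos ho, if_pos ho]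
      omega

lemma unfold3_adj {n : ℤ} (hn : 1 ≤ n) {p q : ℤ × ℤ} (h : GridAdj p q) :
    Grid3Adj (unfold3 n p) (unfold3 n q) := by
  obtain ⟨x, j⟩ := p
  obtain ⟨x', j'⟩ := q
  simp only [GridAdj] at h
  rcases (by omega : (j = j' ∧ (x - x').natAbs = 1) ∨ (x = x' ∧ (j' = j + 1 ∨ j = j' + 1)))
    with ⟨rfl, hx⟩ | ⟨rfl, hj | hj⟩
  · simp only [unfold3, Grid3Adj]
    split_ifs <;> simp <;> omega
  · subst hj; exact unfold3_step n x j hn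
  · subst hj; exact grid3adj_symm (unfold3_step n x j' hn)

lemma unfold3_mem {m n o : ℤ} (hn : 1 ≤ n) (ho : 1 ≤ o) {p : ℤ × ℤ}
    (hp : p ∈ RectV m (n * o)) : unfold3 n p ∈ Rect3V m n o := by
  obtain ⟨x, j⟩ := p
  simp only [RectV, Set.mem_setOf_eq] at hp
  simp only [unfold3, Rect3V, Set.mem_setOf_eq]
  have hd := Int.mul_ediv_add_emod (j - 1) n
  have hr0 : 0 ≤ (j - 1) % n := Int.emod_nonneg _ (by omega)
  have hrn : (j - 1) % n < n := Int.emod_lt_of_pos _ (by omega)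
  set d := (j - 1) / n with hdset
  have hd0 : 0 ≤ d := Int.ediv_nonneg (by omega) (by omega)
  have hdo : d ≤ o - 1 := by
    have h1 : j - 1 ≤ n - 1 + n * (o - 1) := by
      have : n * o = n - 1 + n * (o - 1) + 1 := by ring
      omega
    have h2 := Int.ediv_le_ediv (by omega : (0:ℤ) < n) h1
    rw [Int.add_mul_ediv_left _ _ (by omega : n ≠ 0),
      Int.ediv_eq_zero_of_lt (a := n-1) (b := n) (by omega) (by omega)] at h2
    omega
  have hnd : n * (d + 1) = n * d + n := by ring
  split_ifs <;> refine ⟨by omega, by omega, ?_, ?_, by omega, by omega⟩ <;> omega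

lemma unfold3_inj {n : ℤ} (hn : 1 ≤ n) : Function.Injective (unfold3 n) := by
  intro p q h
  simp only [unfold3, Prod.mk.injEq] at h
  obtain ⟨h1, h2, h3⟩ := h
  have h3' : (p.2 - 1) / n = (q.2 - 1) / n := by omega
  refine Prod.ext h1 ?_
  rw [h3'] at h2
  split_ifs at h2 with hpar <;> omega

/-- Transfer a 2D cycle in `R(m, n*o)` to a 3D cycle in `R(m,n,o)`. -/
lemma cycle_unfold {m n o : ℤ} (hn : 1 ≤ n) (ho : 1 ≤ o) {l : List (ℤ × ℤ)}
    (h : IsGridCycle (RectV m (n * o)) l) :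
    IsGrid3Cycle (Rect3V m n o) (l.map (unfold3 n)) ∧
      (l.map (unfold3 n)).length = l.length := by
  obtain ⟨h3, hmem, hnd, hch⟩ := h
  refine ⟨⟨by simpa using h3, ?_, hnd.map (unfold3_inj hn), ?_⟩, by simp⟩
  · intro v hv
    obtain ⟨u, hu, rfl⟩ := List.mem_map.mp hv
    exact unfold3_mem hn ho (hmem u hu)
  · rw [← List.map_take, ← List.map_append]
    exact (List.isChain_map _).mpr (hch.imp fun a b hab => unfold3_adj hn hab)

/-- Swap of first two coordinates in 3D. -/
def sw3 (v : ℤ × ℤ × ℤ) : ℤ × ℤ × ℤ := (v.2.1, v.1, v.2.2)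

lemma cycle_sw3 {m n o : ℤ} {l : List (ℤ × ℤ × ℤ)} (h : IsGrid3Cycle (Rect3V n m o) l) :
    IsGrid3Cycle (Rect3V m n o) (l.map sw3) ∧ (l.map sw3).length = l.length := by
  obtain ⟨h3, hmem, hnd, hch⟩ := h
  have hinj : Function.Injective sw3 := by
    intro a b hab
    simp only [sw3, Prod.mk.injEq] at hab
    exact Prod.ext hab.2.1 (Prod.ext hab.1 hab.2.2)
  refine ⟨⟨by simpa using h3, ?_, hnd.map hinj, ?_⟩, by simp⟩
  · intro v hv
    obtain ⟨u, hu, rfl⟩ := List.mem_map.mp hv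
    have := hmem u hu
    simp only [Rect3V, Set.mem_setOf_eq, sw3] at *
    omega
  · rw [← List.map_take, ← List.map_append]
    refine (List.isChain_map _).mpr (hch.imp fun a b hab => ?_)
    simp only [Grid3Adj, sw3] at *
    omega

end CK3
namespace CK3

section Forward

variable {l : List (ℤ × ℤ × ℤ)}

/-- default element -/
def dflt : ℤ × ℤ × ℤ := (1, 1, 1)

lemma cyc_adj (h3 : 3 ≤ l.length) (hch : (l ++ l.take 1).Chain' Grid3Adj) :
    ∀ i < l.length,
      Grid3Adj ((l ++ l.take 1).getD i dflt) ((l ++ l.take 1).getD (i+1) dflt) := by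
  intro i hi
  have hL : (l ++ l.take 1).length = l.length + 1 := by
    simp [List.length_take]
    omega
  have h1 : i < (l ++ l.take 1).length - 1 := by omega
  have := List.isChain_iff_getElem.mp hch i (by omega)
  rwa [List.getD_eq_getElem _ dflt (by omega), List.getD_eq_getElem _ dflt (by omega)]

lemma cyc_getD_lt (i : ℕ) (hi : i < l.length) :
    (l ++ l.take 1).getD i dflt = l.getD i dflt := List.getD_append _ _ _ _ hi

lemma cyc_getD_last (h3 : 3 ≤ l.length) :
    (l ++ l.take 1).getD l.length dflt = l.getD 0 dflt := by
  rw [List.getD_append_right _ _ _ _ (le_refl _), Nat.sub_self]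
  match l, h3 with
  | a :: t, _ => simp

lemma cyc_getD_ne (hnd : l.Nodup) {i j : ℕ} (hij : i ≠ j) (hi : i < l.length)
    (hj : j < l.length) : l.getD i dflt ≠ l.getD j dflt := by
  intro h
  rw [List.getD_eq_getElem _ dflt hi, List.getD_eq_getElem _ dflt hj] at h
  have := (hnd.get_inj_iff (i := ⟨i, hi⟩) (j := ⟨j, hj⟩)).mp (by simpa using h)
  simp at this
  omega

lemma cyc_getD_mem (i : ℕ) (hi : i < l.length) : l.getD i dflt ∈ l := by
  rw [List.getD_eq_getElem _ dflt hi]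
  exact List.getElem_mem _

/-- Any cycle in the 3D grid has even length. -/
lemma cycle_even (h3 : 3 ≤ l.length) (hch : (l ++ l.take 1).Chain' Grid3Adj) :
    Even l.length := by
  set k := l.length with hk
  set L := l ++ l.take 1 with hL
  set g : ℕ → ℤ := fun i => (L.getD i dflt).1 + (L.getD i dflt).2.1 + (L.getD i dflt).2.2
    with hg
  have hstep : ∀ i < k, (g (i+1) - g i) % 2 = 1 := by
    intro i hi
    have := cyc_adj h3 hch i hi
    rw [← hL] at this
    simp only [Grid3Adj] at this
    simp only [hg]
    omega
  have hind : ∀ i ≤ k, (g i - g 0 - i) % 2 = 0 := by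
    intro i
    induction i with
    | zero => simp
    | succ i ih =>
      intro hik
      have h1 := ih (by omega)
      have h2 := hstep i (by omega)
      push_cast
      omega
  have hlast : g k = g 0 := by
    simp only [hg]
    rw [cyc_getD_last h3]
    have : L.getD 0 dflt = l.getD 0 dflt := cyc_getD_lt 0 (by omega)
    rw [this]
  have := hind k (le_refl _)
  rw [hlast] at this
  rw [Nat.even_iff]
  omega

/-- A cycle cannot live on a line (all y and z coordinates equal to 1). -/
lemma no_line_cycle (h3 : 3 ≤ l.length) (hnd : l.Nodup)
    (hch : (l ++ l.take 1).Chain' Grid3Adj)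
    (hline : ∀ v ∈ l, v.2.1 = 1 ∧ v.2.2 = 1) : False := by
  set k := l.length with hk
  set L := l ++ l.take 1 with hL
  set x : ℕ → ℤ := fun i => (L.getD i dflt).1 with hx
  have hmemL : ∀ i ≤ k, (L.getD i dflt) ∈ l := by
    intro i hi
    rcases Nat.lt_or_ge i k with h | h
    · rw [cyc_getD_lt i h]; exact cyc_getD_mem i h
    · have : i = k := by omega
      rw [this, cyc_getD_last h3]
      exact cyc_getD_mem 0 (by omega)
  have hadj : ∀ i < k, (x (i+1) - x i).natAbs = 1 := by
    intro i hi
    have h1 := cyc_adj h3 hch i hi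
    rw [← hL] at h1
    have h2 := hline _ (hmemL i (by omega))
    have h3' := hline _ (hmemL (i+1) (by omega))
    simp only [Grid3Adj] at h1
    simp only [hx]
    omega
  have hne2 : ∀ i, i + 2 ≤ k → x (i+2) ≠ x i := by
    intro i hi hxx
    have hyz1 := hline _ (hmemL i (by omega))
    have hyz2 := hline _ (hmemL (i+2) (by omega))
    rcases Nat.lt_or_ge (i+2) k with h | h
    · refine cyc_getD_ne hnd (show i ≠ i + 2 by omega) (by omega) (by omega) ?_
      have e1 : L.getD i dflt = l.getD i dflt := cyc_getD_lt i (by omega)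
      have e2 : L.getD (i+2) dflt = l.getD (i+2) dflt := cyc_getD_lt (i+2) (by omega)
      rw [← e1, ← e2]
      have : (L.getD i dflt).2 = (L.getD (i+2) dflt).2 := by
        refine Prod.ext ?_ ?_ <;> omega
      exact Prod.ext hxx.symm this
    · have hik : i + 2 = k := by omega
      have hi0 : i ≠ 0 := by omega
      refine cyc_getD_ne hnd (show (0:ℕ) ≠ i by omega) (by omega) (by omega) ?_
      have e1 : L.getD i dflt = l.getD i dflt := cyc_getD_lt i (by omega)
      have e2 : L.getD (i+2) dflt = l.getD 0 dflt := by rw [hik]; exact cyc_getD_last h3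
      rw [← e1, ← e2]
      have : (L.getD (i+2) dflt).2 = (L.getD i dflt).2 := by
        refine Prod.ext ?_ ?_ <;> omega
      exact Prod.ext hxx this
  have hsteps : ∀ i, i + 1 ≤ k → x (i+1) - x i = x 1 - x 0 := by
    intro i
    induction i with
    | zero => intro _; rfl
    | succ i ih =>
      intro hik
      have h1 := ih (by omega)
      have h2 := hadj i (by omega)
      have h3' := hadj (i+1) (by omega)
      have h4 := hne2 i (by omega)
      have : i + 1 + 1 = i + 2 := by omega
      rw [this] at h3' ⊢
      omega
  have hs1 : (x 1 - x 0).natAbs = 1 := by simpa using hadj 0 (by omega)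
  rcases (by omega : x 1 - x 0 = 1 ∨ x 1 - x 0 = -1) with hs | hs
  · have hlin : ∀ i ≤ k, x i = x 0 + i := by
      intro i
      induction i with
      | zero => simp
      | succ i ih =>
        intro hik
        have h1 := ih (by omega)
        have h2 := hsteps i (by omega)
        push_cast
        omega
    have h1 := hlin k (le_refl _)
    have h2 : x k = x 0 := by
      simp only [hx]
      rw [cyc_getD_last h3, cyc_getD_lt 0 (by omega)]
    omega
  · have hlin : ∀ i ≤ k, x i = x 0 - i := by
      intro i
      induction i with
      | zero => simp
      | succ i ih =>
        intro hik
        have h1 := ih (by omega)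
        have h2 := hsteps i (by omega)
        push_cast
        omega
    have h1 := hlin k (le_refl _)
    have h2 : x k = x 0 := by
      simp only [hx]
      rw [cyc_getD_last h3, cyc_getD_lt 0 (by omega)]
    omega

/-- cardinality bound -/
lemma cycle_card_bound {m n o : ℤ} (hm : 1 ≤ m) (hn : 1 ≤ n) (ho : 1 ≤ o)
    (hmem : ∀ v ∈ l, v ∈ Rect3V m n o) (hnd : l.Nodup) :
    (l.length : ℤ) ≤ m * n * o := by
  classical
  set S : Finset (ℤ × ℤ × ℤ) :=
    (Finset.Icc 1 m) ×ˢ ((Finset.Icc 1 n) ×ˢ (Finset.Icc 1 o)) with hS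
  have hsub : l.toFinset ⊆ S := by
    intro v hv
    have := hmem v (List.mem_toFinset.mp hv)
    simp only [Rect3V, Set.mem_setOf_eq] at this
    simp only [hS, Finset.mem_product, Finset.mem_Icc]
    exact ⟨⟨this.1, this.2.1⟩, ⟨this.2.2.1, this.2.2.2.1⟩, this.2.2.2.2⟩
  have hcard : l.length ≤ S.card := by
    rw [← List.toFinset_card_of_nodup hnd]
    exact Finset.card_le_card hsub
  have hScard : S.card = (m.toNat) * ((n.toNat) * (o.toNat)) := by
    simp only [hS, Finset.card_product, Int.card_Icc, add_sub_cancel_right]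
  have hcast : ((m.toNat * (n.toNat * o.toNat) : ℕ) : ℤ) = m * n * o := by
    push_cast
    rw [Int.toNat_of_nonneg (by omega), Int.toNat_of_nonneg (by omega),
      Int.toNat_of_nonneg (by omega)]
    ring
  calc (l.length : ℤ) ≤ ((m.toNat * (n.toNat * o.toNat) : ℕ) : ℤ) := by
        rw [← hScard]; exact_mod_cast hcard
  _ = m * n * o := hcast

/-- Swap of first and third coordinates in 3D. -/
def sw3c (v : ℤ × ℤ × ℤ) : ℤ × ℤ × ℤ := (v.2.2, v.2.1, v.1)

lemma cycle_sw3c {m n o : ℤ} {l : List (ℤ × ℤ × ℤ)} (h : IsGrid3Cycle (Rect3V o n m) l) :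
    IsGrid3Cycle (Rect3V m n o) (l.map sw3c) ∧ (l.map sw3c).length = l.length := by
  obtain ⟨h3, hmem, hnd, hch⟩ := h
  have hinj : Function.Injective sw3c := by
    intro a b hab
    simp only [sw3c, Prod.mk.injEq] at hab
    exact Prod.ext hab.2.2 (Prod.ext hab.2.1 hab.1)
  refine ⟨⟨by simpa using h3, ?_, hnd.map hinj, ?_⟩, by simp⟩
  · intro v hv
    obtain ⟨u, hu, rfl⟩ := List.mem_map.mp hv
    have := hmem u hu
    simp only [Rect3V, Set.mem_setOf_eq, sw3c] at *
    omega
  · rw [← List.map_take, ← List.map_append]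
    refine (List.isChain_map _).mpr (hch.imp fun a b hab => ?_)
    simp only [Grid3Adj, sw3c] at *
    omega

end Forward

end CK3

namespace CK3

lemma construct {m n o : ℤ} {k : ℕ} (hm : 2 ≤ m) (hn : 1 ≤ n) (ho : 1 ≤ o)
    (hno : 2 ≤ n * o) (hke : Even k) (hk4 : 4 ≤ k) (hkb : (k:ℤ) ≤ m * n * o) :
    ∃ l, IsGrid3Cycle (Rect3V m n o) l ∧ l.length = k := by
  obtain ⟨l2, hcyc2, hlen⟩ := exists_2d_cycle hm hno hke hk4 (by rw [mul_assoc] at hkb; exact hkb)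
  have h := cycle_unfold hn ho hcyc2
  exact ⟨_, h.1, by rw [h.2, hlen]⟩

end CK3


/-- The 3D grid graph `R(m,n,o)` has a cycle with exactly `k`
vertices iff at least two of `m, n, o` are greater than 1, `k` is even and
`4 ≤ k ≤ m·n·o`. -/
theorem cycle_of_length_k_in_3d (m n o : ℤ) (k : ℕ) :
    (∃ l : List (ℤ × ℤ × ℤ), IsGrid3Cycle (Rect3V m n o) l ∧ l.length = k) ↔
      (((1 < m ∧ 1 < n) ∨ (1 < m ∧ 1 < o) ∨ (1 < n ∧ 1 < o)) ∧
        Even k ∧ 4 ≤ k ∧ (k : ℤ) ≤ m * n * o) := by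
  constructor
  · rintro ⟨l, hcyc, rfl⟩
    obtain ⟨h3, hmem, hnd, hch⟩ := hcyc
    have hv0 := hmem _ (CK3.cyc_getD_mem 0 (by omega))
    simp only [Rect3V, Set.mem_setOf_eq] at hv0
    have hm1 : 1 ≤ m := by omega
    have hn1 : 1 ≤ n := by omega
    have ho1 : 1 ≤ o := by omega
    have he := CK3.cycle_even h3 hch
    have he' := Nat.even_iff.mp he
    refine ⟨?_, he, by omega, CK3.cycle_card_bound hm1 hn1 ho1 hmem hnd⟩
    by_contra hno
    have hcase : (n = 1 ∧ o = 1) ∨ (m = 1 ∧ o = 1) ∨ (m = 1 ∧ n = 1) := by omega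
    rcases hcase with ⟨hn', ho'⟩ | ⟨hm', ho'⟩ | ⟨hm', hn'⟩
    · refine CK3.no_line_cycle h3 hnd hch fun v hv => ?_
      have := hmem v hv
      simp only [Rect3V, Set.mem_setOf_eq] at this
      omega
    · obtain ⟨⟨h3', hmem', hnd', hch'⟩, -⟩ :=
        CK3.cycle_sw3 (m := n) (n := m) (o := o) ⟨h3, hmem, hnd, hch⟩
      refine CK3.no_line_cycle h3' hnd' hch' fun v hv => ?_
      have := hmem' v hv
      simp only [Rect3V, Set.mem_setOf_eq] at this
      omega
    · obtain ⟨⟨h3', hmem', hnd', hch'⟩, -⟩ :=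
        CK3.cycle_sw3c (m := o) (n := n) (o := m) ⟨h3, hmem, hnd, hch⟩
      refine CK3.no_line_cycle h3' hnd' hch' fun v hv => ?_
      have := hmem' v hv
      simp only [Rect3V, Set.mem_setOf_eq] at this
      omega
  · rintro ⟨hdims, hke, hk4, hkb⟩
    have hP : (4:ℤ) ≤ m * n * o := by omega
    rcases hdims with ⟨hm, hn⟩ | ⟨hm, ho⟩ | ⟨hn, ho⟩
    · have hmn : (0:ℤ) < m * n := mul_pos (by omega) (by omega)
      have ho1 : 1 ≤ o := by nlinarith
      have hno : 2 ≤ n * o := by nlinarith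
      exact CK3.construct (by omega) (by omega) ho1 hno hke hk4 hkb
    · have hmo : (0:ℤ) < m * o := mul_pos (by omega) (by omega)
      have hn1 : 1 ≤ n := by nlinarith [mul_assoc m n o]
      have hno : 2 ≤ n * o := by nlinarith
      exact CK3.construct (by omega) hn1 (by omega) hno hke hk4 hkb
    · have hno' : (0:ℤ) < n * o := mul_pos (by omega) (by omega)
      have hm1 : 1 ≤ m := by nlinarith [mul_assoc m n o]
      have hmo : 2 ≤ m * o := by nlinarith
      obtain ⟨l3, hcyc3, hlen3⟩ := CK3.construct (m := n) (n := m) (o := o)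
        (by omega) hm1 (by omega) hmo hke hk4 (by nlinarith [mul_assoc m n o])
      obtain ⟨hc, hl⟩ := CK3.cycle_sw3 (m := m) (n := n) (o := o) hcyc3
      exact ⟨_, hc, by rw [hl, hlen3]⟩
end
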